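/- arXiv:0801.0798 — 6 statements merged into one kernel-verified Lean document; each statement's English description precedes it below -/
import Mathlib

section
/- For every integer a ≥ 2 there is a constant C = C(a) > 0 such that for every positive integer n there exists a 2-coloring χ of [1,n] with M_{χ,a}(n) ≤ n²/(2a(a²+2a+3)) + C·n. -/
open Finset

/-- The number of monochromatic `(x, y, x + a*y)` triples of the 2-coloring `χ`
(with colors `true` = red, `false` = blue) of `[1, n]`: ordered pairs `(x, y)` of
positive integers with `x + a*y ≤ n` such that `χ x = χ y = χ (x + a*y)`. -/
def monoTriples (a n : ℕ) (χ : ℕ → Bool) : ℕ :=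
  ((Finset.Icc 1 n ×ˢ Finset.Icc 1 n).filter
    (fun p => p.1 + a * p.2 ≤ n ∧ χ p.1 = χ p.2 ∧ χ p.2 = χ (p.1 + a * p.2))).card

private lemma div_cast_lb (q s : ℕ) (hs : 0 < s) : (q:ℝ)/s - 1 ≤ ((q/s : ℕ) : ℝ) := by
  have h1 : q < s*(q/s) + s := by
    have h2 := Nat.div_add_mod q s
    have h3 := Nat.mod_lt q hs
    omega
  have h2 : (q:ℝ) < s*((q/s:ℕ):ℝ) + s := by exact_mod_cast h1
  have hs' : (0:ℝ) < s := by exact_mod_cast hs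
  rw [sub_le_iff_le_add, div_le_iff₀ hs']
  nlinarith

private lemma key_div (p q s : ℕ) (hs : 0 < s) :
    (((p - s*q)/s : ℕ) : ℝ) ≤ max 0 ((p:ℝ)/s - q) := by
  have hs' : (0:ℝ) < s := by exact_mod_cast hs
  rcases le_total p (s*q) with h | h
  · simp [Nat.sub_eq_zero_of_le h]
  · have h1 : (((p - s*q)/s : ℕ) : ℝ) ≤ ((p - s*q : ℕ) : ℝ)/s := Nat.cast_div_le
    have h2 : ((p - s*q : ℕ) : ℝ) = (p:ℝ) - s*q := by
      rw [Nat.cast_sub h]; push_cast; ring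
    refine h1.trans (le_trans ?_ (le_max_right _ _))
    rw [h2]
    apply le_of_eq
    field_simp

private lemma ramp_step (aR c : ℝ) (ha : 0 < aR) (t : ℝ) :
    2*aR*max 0 (c - aR*(t+1)) ≤ (max 0 (c - aR*t))^2 - (max 0 (c - aR*(t+1)))^2 := by
  rcases le_or_gt (c - aR*(t+1)) 0 with h | h
  · rw [max_eq_left h]
    have := sq_nonneg (max 0 (c - aR*t))
    nlinarith
  · have h2 : (0:ℝ) < c - aR*t := by nlinarith
    rw [max_eq_right h.le, max_eq_right h2.le]
    nlinarith

private lemma ramp_sum_range (aR d : ℝ) (ha : 0 < aR) (m : ℕ) :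
    ∑ i ∈ Finset.range m, max 0 (d - aR*i) ≤
      ((max 0 (d + aR))^2 - (max 0 (d + aR - aR*m))^2)/(2*aR) := by
  have h5 : (0:ℝ) < 2*aR := by linarith
  induction m with
  | zero => simp
  | succ m ih =>
    rw [Finset.sum_range_succ]
    have step := ramp_step aR (d + aR) ha m
    have e1 : d + aR - aR*(m+1) = d - aR*m := by ring
    rw [e1] at step
    push_cast
    rw [show d + aR - aR*((m:ℝ)+1) = d - aR*m from by ring]
    rw [le_div_iff₀ h5]
    have ih' := (le_div_iff₀ h5).mp ih
    nlinarith [step, ih']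

private lemma ramp_sum_Icc (aR c : ℝ) (ha : 0 < aR) (k n : ℕ) :
    ∑ y ∈ Finset.Icc k n, max 0 (c - aR*y) ≤ (max 0 (c - aR*((k:ℝ)-1)))^2/(2*aR) := by
  have h5 : (0:ℝ) < 2*aR := by linarith
  have h1 : Finset.Icc k n = Finset.Ico k (n+1) := by rw [Finset.Ico_add_one_right_eq_Icc]
  rw [h1, Finset.sum_Ico_eq_sum_range]
  have h2 : ∀ i : ℕ, max 0 (c - aR*((k + i : ℕ):ℝ)) = max 0 ((c - aR*k) - aR*i) := by
    intro i; push_cast; ring_nf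
  simp only [h2]
  refine (ramp_sum_range aR (c - aR*k) ha _).trans ?_
  have h3 : c - aR*(k:ℝ) + aR = c - aR*((k:ℝ)-1) := by ring
  rw [h3]
  have h4 : (0:ℝ) ≤ (max 0 (c - aR*((k:ℝ)-1) - aR*((n+1-k:ℕ):ℝ)))^2 := sq_nonneg _
  apply div_le_div_of_nonneg_right ?_ ?_ |>.trans (le_refl _) <;> linarith

private def innerSet (a n : ℕ) (χ : ℕ → Bool) (y : ℕ) : Finset ℕ :=
  (Finset.Icc 1 n).filter (fun x => x + a*y ≤ n ∧ χ x = χ y ∧ χ y = χ (x + a*y))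

private lemma mono_le (a n : ℕ) (χ : ℕ → Bool) :
    monoTriples a n χ ≤ ∑ y ∈ Finset.Icc 1 n, (innerSet a n χ y).card := by
  rw [monoTriples]
  rw [Finset.card_eq_sum_card_fiberwise (f := Prod.snd) (t := Finset.Icc 1 n)
    (fun p hp => by simp only [mem_coe, mem_filter, mem_product] at hp; exact hp.1.2)]
  apply Finset.sum_le_sum
  intro y hy
  apply Finset.card_le_card_of_injOn Prod.fst
  · intro p hp
    simp only [mem_coe, mem_filter, mem_product] at hp
    obtain ⟨⟨⟨hp1, hp2⟩, hcond⟩, hpy⟩ := hp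
    rw [innerSet, mem_coe, mem_filter]
    rw [hpy] at hcond
    exact ⟨hp1, hcond⟩
  · intro p hp q hq h
    simp only [coe_filter, Set.mem_setOf_eq] at hp hq
    exact Prod.ext h (hp.2.trans hq.2.symm)

private lemma filter_card_le_Icc {S : Finset ℕ} {p : ℕ → Prop} [DecidablePred p]
    (lo hi : ℕ) (h : ∀ x ∈ S.filter p, lo ≤ x ∧ x ≤ hi) :
    (S.filter p).card ≤ hi + 1 - lo := by
  have := Finset.card_le_card (fun x hx => Finset.mem_Icc.mpr (h x hx))
  rwa [Nat.card_Icc] at this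

set_option maxHeartbeats 2000000 in
/-- For every `n` there is a 2-coloring of `[1,n]` with at most
`n² / (2a(a² + 2a + 3)) + C·n` monochromatic `(x, y, x + a*y)` triples. -/
theorem exists_coloring_monoTriples_le (a : ℕ) (ha : 2 ≤ a) :
    ∃ C : ℝ, 0 < C ∧ ∀ n : ℕ, 0 < n →
      ∃ χ : ℕ → Bool,
        (monoTriples a n χ : ℝ) ≤
          (n : ℝ) ^ 2 / (2 * a * ((a : ℝ) ^ 2 + 2 * a + 3)) + C * n := by
  classical
  refine ⟨(a:ℝ) + 3, by positivity, fun n hn => ?_⟩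
  set s := a^2+2*a+3 with hs
  set A := (a+1)*n with hA
  set B := (a^2+2*a+2)*n with hB
  set χ : ℕ → Bool := fun t => decide (s*t ≤ A ∨ B < s*t) with hχ
  refine ⟨χ, ?_⟩
  have hs0 : 0 < s := by positivity
  have ha0 : 0 < a := by omega
  -- real abbreviations
  have hsR : (0:ℝ) < (s:ℕ) := by exact_mod_cast hs0
  have haR : (0:ℝ) < (a:ℕ) := by exact_mod_cast ha0
  -- coverage of the inner sets
  have hsub : ∀ y ∈ Finset.Icc 1 n, innerSet a n χ y ⊆ (Finset.Icc 1 n).filter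
      (fun x => (s*x + s*(a*y) ≤ A) ∨ ((B < s*x ∧ x + a*y ≤ n) ∨
        (A < s*y ∧ A < s*x ∧ s*x + s*(a*y) ≤ B))) := by
    intro y hy x hx
    rw [Finset.mem_Icc] at hy
    rw [innerSet, Finset.mem_filter, Finset.mem_Icc] at hx
    obtain ⟨⟨hx1, hxn⟩, hxy, hc1, hc2⟩ := hx
    simp only [hχ, decide_eq_decide] at hc1 hc2
    rw [Finset.mem_filter, Finset.mem_Icc]
    refine ⟨⟨hx1, hxn⟩, ?_⟩
    by_cases hyr : s*y ≤ A ∨ B < s*y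
    · -- y is red
      have hyA : s*y ≤ A := by
        rcases hyr with h | h
        · exact h
        · exfalso
          have hay : a*y < n := by
            have : 1 + a*y ≤ n := le_trans (Nat.add_le_add_right hx1 _) hxy
            omega
          have k1 : a*B < a*(s*y) := (Nat.mul_lt_mul_left ha0).mpr h
          have k2 : a*(s*y) = s*(a*y) := by ring
          have k3 : s*(a*y) < s*n := (Nat.mul_lt_mul_left hs0).mpr hay
          have k4 : s*n ≤ a*B := by
            have h9 : a^2+2*a+3 ≤ a*(a^2+2*a+2) := by nlinarith
            calc s*n = (a^2+2*a+3)*n := by rw [hs]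
            _ ≤ (a*(a^2+2*a+2))*n := Nat.mul_le_mul_right n h9
            _ = a*B := by rw [hB]; ring
          omega
      have hxr : s*x ≤ A ∨ B < s*x := hc1.mpr (Or.inl hyA)
      rcases hxr with hxA | hxB
      · have hzr : s*(x + a*y) ≤ A ∨ B < s*(x + a*y) := hc2.mp (Or.inl hyA)
        rcases hzr with hzA | hzB
        · left
          rw [Nat.mul_add] at hzA
          exact hzA
        · exfalso
          rw [Nat.mul_add] at hzB
          have k1 : s*(a*y) ≤ a*A := by
            calc s*(a*y) = a*(s*y) := by ring
            _ ≤ a*A := Nat.mul_le_mul_left a hyA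
          have k2 : (a+1)*A ≤ B := by
            rw [hA, hB]
            nlinarith
          nlinarith
      · exact Or.inr (Or.inl ⟨hxB, hxy⟩)
    · -- y is blue
      push_neg at hyr
      obtain ⟨hyA, hyB⟩ := hyr
      have hxb : ¬(s*x ≤ A ∨ B < s*x) := fun h => (Nat.lt_irrefl _ (hyA.trans_le (by
        have := hc1.mp h
        rcases this with h' | h'
        · exact h'
        · omega)))
      push_neg at hxb
      have hzb : ¬(s*(x+a*y) ≤ A ∨ B < s*(x+a*y)) := by
        intro h
        have := hc2.mpr h
        rcases this with h' | h' <;> omega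
      push_neg at hzb
      refine Or.inr (Or.inr ⟨hyA, hxb.1, ?_⟩)
      have := hzb.2
      rw [Nat.mul_add] at this
      exact this

  -- ℕ-level per-y card bound
  have hcard : ∀ y ∈ Finset.Icc 1 n, (innerSet a n χ y).card ≤
      ((Finset.Icc 1 n).filter (fun x => s*x + s*(a*y) ≤ A)).card
      + ((Finset.Icc 1 n).filter (fun x => B < s*x ∧ x + a*y ≤ n)).card
      + ((Finset.Icc 1 n).filter (fun x => A < s*y ∧ A < s*x ∧ s*x + s*(a*y) ≤ B)).card := by
    intro y hy
    refine (Finset.card_le_card (hsub y hy)).trans ?_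
    rw [Finset.filter_or, Finset.filter_or]
    refine (Finset.card_union_le _ _).trans ?_
    have := Finset.card_union_le
      ((Finset.Icc 1 n).filter (fun x => B < s*x ∧ x + a*y ≤ n))
      ((Finset.Icc 1 n).filter (fun x => A < s*y ∧ A < s*x ∧ s*x + s*(a*y) ≤ B))
    omega
  -- ℕ counts
  have hc1 : ∀ y : ℕ, ((Finset.Icc 1 n).filter (fun x => s*x + s*(a*y) ≤ A)).card
      ≤ (A - s*(a*y))/s := by
    intro y
    have := filter_card_le_Icc (S := Finset.Icc 1 n)
      (p := fun x => s*x + s*(a*y) ≤ A) 1 ((A - s*(a*y))/s) ?_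
    · simpa using this
    · intro x hx
      rw [Finset.mem_filter, Finset.mem_Icc] at hx
      refine ⟨hx.1.1, ?_⟩
      rw [Nat.le_div_iff_mul_le hs0, mul_comm]
      exact Nat.le_sub_of_add_le hx.2
  have hc2 : ∀ y : ℕ, ((Finset.Icc 1 n).filter (fun x => B < s*x ∧ x + a*y ≤ n)).card
      ≤ (n - a*y) - B/s := by
    intro y
    have := filter_card_le_Icc (S := Finset.Icc 1 n)
      (p := fun x => B < s*x ∧ x + a*y ≤ n) (B/s + 1) (n - a*y) ?_
    · simpa [Nat.add_sub_add_right] using this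
    · intro x hx
      rw [Finset.mem_filter, Finset.mem_Icc] at hx
      constructor
      · have : B/s < x := by
          rw [Nat.div_lt_iff_lt_mul hs0, mul_comm]
          exact hx.2.1
        omega
      · exact Nat.le_sub_of_add_le hx.2.2
  have hc3 : ∀ y : ℕ, ((Finset.Icc 1 n).filter
        (fun x => A < s*y ∧ A < s*x ∧ s*x + s*(a*y) ≤ B)).card
      ≤ (B - s*(a*y))/s - A/s := by
    intro y
    have := filter_card_le_Icc (S := Finset.Icc 1 n)
      (p := fun x => A < s*y ∧ A < s*x ∧ s*x + s*(a*y) ≤ B) (A/s + 1) ((B - s*(a*y))/s) ?_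
    · simpa [Nat.add_sub_add_right] using this
    · intro x hx
      rw [Finset.mem_filter, Finset.mem_Icc] at hx
      constructor
      · have : A/s < x := by
          rw [Nat.div_lt_iff_lt_mul hs0, mul_comm]
          exact hx.2.2.1
        omega
      · rw [Nat.le_div_iff_mul_le hs0, mul_comm]
        exact Nat.le_sub_of_add_le hx.2.2.2
  have hc3zero : ∀ y : ℕ, ¬(A < s*y) → ((Finset.Icc 1 n).filter
      (fun x => A < s*y ∧ A < s*x ∧ s*x + s*(a*y) ≤ B)).card = 0 := by
    intro y hAy
    rw [Finset.card_eq_zero, Finset.filter_eq_empty_iff]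
    exact fun x _ h => hAy h.1
  -- real per-y bounds
  have hmax0 : ∀ X d : ℝ, 0 ≤ d → max 0 X - d ≤ max 0 (X - d) := by
    intro X d hd
    rcases le_total X 0 with h | h
    · rw [max_eq_left h]; simp [hd]
    · rw [max_eq_right h]; exact le_max_right _ _
  have hr1 : ∀ y : ℕ, (((Finset.Icc 1 n).filter (fun x => s*x + s*(a*y) ≤ A)).card : ℝ)
      ≤ max 0 ((A:ℝ)/s - (a:ℝ)*y) := by
    intro y
    refine le_trans (Nat.cast_le.mpr (hc1 y)) ?_
    have := key_div A (a*y) s hs0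
    rwa [Nat.cast_mul a y] at this
  have hr2 : ∀ y : ℕ, (((Finset.Icc 1 n).filter (fun x => B < s*x ∧ x + a*y ≤ n)).card : ℝ)
      ≤ max 0 ((n:ℝ) - (B:ℝ)/s - (a:ℝ)*y) + 1 := by
    intro y
    refine le_trans (Nat.cast_le.mpr (hc2 y)) ?_
    by_cases hz : (n - a*y) - B/s = 0
    · rw [hz]
      simp only [Nat.cast_zero]
      positivity
    · have hq : ∀ P Q N : ℕ, N - P - Q ≠ 0 → (Q ≤ N - P ∧ P ≤ N) := by intros; omega
      obtain ⟨h1, h2⟩ := hq (a*y) (B/s) n hz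
      rw [Nat.cast_sub h1, Nat.cast_sub h2]
      have h3 := div_cast_lb B s hs0
      have h4 : ((n:ℝ) - ↑(a*y)) - ↑(B/s) ≤ ((n:ℝ) - (B:ℝ)/s - (a:ℝ)*y) + 1 := by
        rw [Nat.cast_mul a y]
        linarith
      refine h4.trans ?_
      have := le_max_right 0 ((n:ℝ) - (B:ℝ)/s - (a:ℝ)*y)
      linarith
  have hr3 : ∀ y : ℕ, (((Finset.Icc 1 n).filter
        (fun x => A < s*y ∧ A < s*x ∧ s*x + s*(a*y) ≤ B)).card : ℝ)
      ≤ if A < s*y then max 0 ((B:ℝ)/s - (A:ℝ)/s - (a:ℝ)*y) + 1 else 0 := by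
    intro y
    by_cases hAy : A < s*y
    · rw [if_pos hAy]
      refine le_trans (Nat.cast_le.mpr (hc3 y)) ?_
      by_cases hz : (B - s*(a*y))/s - A/s = 0
      · rw [hz]
        simp only [Nat.cast_zero]
        positivity
      · have hq : ∀ P Q : ℕ, P - Q ≠ 0 → Q ≤ P := by intros; omega
        have h1 := hq _ _ hz
        rw [Nat.cast_sub h1]
        have h2 := key_div B (a*y) s hs0
        rw [Nat.cast_mul a y] at h2
        have h3 := div_cast_lb A s hs0
        have h4 : (((B - s*(a*y))/s : ℕ) : ℝ) - ((A/s : ℕ) : ℝ)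
            ≤ max 0 ((B:ℝ)/s - (a:ℝ)*y) - (A:ℝ)/s + 1 := by linarith
        refine h4.trans ?_
        have h5 := hmax0 ((B:ℝ)/s - (a:ℝ)*y) ((A:ℝ)/s) (by positivity)
        have h6 : (B:ℝ)/s - (a:ℝ)*y - (A:ℝ)/s = (B:ℝ)/s - (A:ℝ)/s - (a:ℝ)*y := by ring
        rw [h6] at h5
        linarith
    · rw [if_neg hAy, hc3zero y hAy]
      norm_num
  -- assemble the sum
  have hS : (monoTriples a n χ : ℝ) ≤
      (∑ y ∈ Finset.Icc 1 n, max 0 ((A:ℝ)/s - (a:ℝ)*y))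
      + ((∑ y ∈ Finset.Icc 1 n, max 0 ((n:ℝ) - (B:ℝ)/s - (a:ℝ)*y)) + n)
      + ((∑ y ∈ Finset.Icc (A/s + 1) n, max 0 ((B:ℝ)/s - (A:ℝ)/s - (a:ℝ)*y)) + n) := by
    have step1 : (monoTriples a n χ : ℝ) ≤ ∑ y ∈ Finset.Icc 1 n,
        ((max 0 ((A:ℝ)/s - (a:ℝ)*y) + (max 0 ((n:ℝ) - (B:ℝ)/s - (a:ℝ)*y) + 1))
          + (if A < s*y then max 0 ((B:ℝ)/s - (A:ℝ)/s - (a:ℝ)*y) + 1 else 0)) := by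
      refine le_trans (Nat.cast_le.mpr (mono_le a n χ)) ?_
      rw [Nat.cast_sum]
      refine Finset.sum_le_sum (fun y hy => ?_)
      refine le_trans (Nat.cast_le.mpr (hcard y hy)) ?_
      rw [Nat.cast_add, Nat.cast_add]
      exact add_le_add (add_le_add (hr1 y) (hr2 y)) (hr3 y)
    refine step1.trans ?_
    rw [Finset.sum_add_distrib, Finset.sum_add_distrib, Finset.sum_add_distrib,
      Finset.sum_const, Nat.card_Icc 1 n]
    have hite : (∑ y ∈ Finset.Icc 1 n,
          (if A < s*y then max 0 ((B:ℝ)/s - (A:ℝ)/s - (a:ℝ)*y) + 1 else 0))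
        ≤ (∑ y ∈ Finset.Icc (A/s + 1) n, max 0 ((B:ℝ)/s - (A:ℝ)/s - (a:ℝ)*y)) + n := by
      rw [← Finset.sum_filter]
      have hsub2 : (Finset.Icc 1 n).filter (fun y => A < s*y) ⊆ Finset.Icc (A/s + 1) n := by
        intro y hy
        rw [Finset.mem_filter, Finset.mem_Icc] at hy
        rw [Finset.mem_Icc]
        refine ⟨?_, hy.1.2⟩
        have : A/s < y := by
          rw [Nat.div_lt_iff_lt_mul hs0, mul_comm]
          exact hy.2
        omega
      refine le_trans (Finset.sum_le_sum_of_subset_of_nonneg hsub2 (fun y _ _ => by positivity)) ?_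
      rw [Finset.sum_add_distrib, Finset.sum_const, Nat.card_Icc]
      have hcle : ∀ Q : ℕ, n + 1 - (Q + 1) ≤ n := fun Q => by omega
      have : ((n + 1 - (A/s + 1) : ℕ) : ℝ) ≤ (n : ℝ) := Nat.cast_le.mpr (hcle _)
      have hsmul : ((n + 1 - (A/s + 1)) • (1:ℝ)) = ((n + 1 - (A/s + 1) : ℕ) : ℝ) := by
        simp
      rw [hsmul]
      linarith
    have h11 : ((n + 1 - 1) • (1:ℝ)) = (n:ℝ) := by simp
    rw [h11]
    linarith [hite]
  -- cast identities
  have hsne : ((s:ℕ):ℝ) ≠ 0 := ne_of_gt hsR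
  have hsR' : ((s:ℕ):ℝ) = (a:ℝ)^2+2*(a:ℝ)+3 := by rw [hs]; push_cast; ring
  have hAR : ((A:ℕ):ℝ) = ((a:ℝ)+1)*n := by rw [hA]; push_cast; ring
  have hBR : ((B:ℕ):ℝ) = ((a:ℝ)^2+2*(a:ℝ)+2)*n := by rw [hB]; push_cast; ring
  have hnB : (n:ℝ) - (B:ℝ)/s = (n:ℝ)/s := by
    rw [hBR, hsR']
    have h9 : ((a:ℝ)^2+2*(a:ℝ)+3) ≠ 0 := by rw [← hsR']; exact hsne
    field_simp
    ring
  -- bound the three ramp sums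
  have hT1 : (∑ y ∈ Finset.Icc 1 n, max 0 ((A:ℝ)/s - (a:ℝ)*y))
      ≤ ((A:ℝ)/s)^2/(2*(a:ℝ)) := by
    refine (ramp_sum_Icc (a:ℝ) ((A:ℝ)/s) haR 1 n).trans ?_
    have h1 : ((A:ℝ)/s - (a:ℝ)*(((1:ℕ):ℝ)-1)) = (A:ℝ)/s := by push_cast; ring
    rw [h1, max_eq_right (by positivity)]
  have hT2 : (∑ y ∈ Finset.Icc 1 n, max 0 ((n:ℝ) - (B:ℝ)/s - (a:ℝ)*y))
      ≤ ((n:ℝ)/s)^2/(2*(a:ℝ)) := by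
    refine (ramp_sum_Icc (a:ℝ) ((n:ℝ) - (B:ℝ)/s) haR 1 n).trans ?_
    have h1 : ((n:ℝ) - (B:ℝ)/s - (a:ℝ)*(((1:ℕ):ℝ)-1)) = (n:ℝ)/s := by
      rw [← hnB]; push_cast; ring
    rw [h1, max_eq_right (by positivity)]
  have hT3 : (∑ y ∈ Finset.Icc (A/s + 1) n, max 0 ((B:ℝ)/s - (A:ℝ)/s - (a:ℝ)*y))
      ≤ ((n:ℝ)/s + (a:ℝ))^2/(2*(a:ℝ)) := by
    refine (ramp_sum_Icc (a:ℝ) ((B:ℝ)/s - (A:ℝ)/s) haR (A/s + 1) n).trans ?_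
    have e1 : ((A/s+1 : ℕ):ℝ) - 1 = ((A/s : ℕ):ℝ) := by push_cast; ring
    rw [e1]
    have h2 := div_cast_lb A s hs0
    have hid : (B:ℝ)/s - (A:ℝ)/s - (a:ℝ)*((A:ℝ)/s) = (n:ℝ)/s := by
      rw [hAR, hBR, hsR']
      have h9 : ((a:ℝ)^2+2*(a:ℝ)+3) ≠ 0 := by rw [← hsR']; exact hsne
      field_simp
      ring
    have h2' : (a:ℝ)*((A:ℝ)/s - 1) ≤ (a:ℝ)*((A/s:ℕ):ℝ) :=
      mul_le_mul_of_nonneg_left h2 (le_of_lt haR)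
    have h3 : (B:ℝ)/s - (A:ℝ)/s - (a:ℝ)*((A/s:ℕ):ℝ) ≤ (n:ℝ)/s + (a:ℝ) := by
      linarith [hid, h2']
    have h4 : max 0 ((B:ℝ)/s - (A:ℝ)/s - (a:ℝ)*((A/s:ℕ):ℝ)) ≤ (n:ℝ)/s + (a:ℝ) :=
      max_le (by positivity) h3
    have h5 : (max 0 ((B:ℝ)/s - (A:ℝ)/s - (a:ℝ)*((A/s:ℕ):ℝ)))^2 ≤ ((n:ℝ)/s + (a:ℝ))^2 :=
      pow_le_pow_left₀ (le_max_left _ _) h4 2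
    have h6 : (0:ℝ) < 2*(a:ℝ) := by linarith
    gcongr
  -- final numeric computation
  have hν : (1:ℝ) ≤ (n:ℝ) := by exact_mod_cast hn
  have hα : (2:ℝ) ≤ (a:ℝ) := by exact_mod_cast ha
  refine hS.trans ?_
  have hchain : ((A:ℝ)/s)^2/(2*(a:ℝ))
      + (((n:ℝ)/s)^2/(2*(a:ℝ)) + n) + (((n:ℝ)/s + (a:ℝ))^2/(2*(a:ℝ)) + n)
      ≤ (n:ℝ)^2/(2*(a:ℝ)*((a:ℝ)^2+2*(a:ℝ)+3)) + ((a:ℝ)+3)*n := by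
    rw [hAR, hsR']
    set α := (a:ℝ) with hαd
    set ν := (n:ℝ) with hνd
    have hσ : (0:ℝ) < α^2+2*α+3 := by nlinarith
    have hα0 : (0:ℝ) < α := by linarith
    rw [← sub_nonneg]
    have key : ν^2/(2*α*(α^2+2*α+3)) + (α+3)*ν
        - (((α+1)*ν/(α^2+2*α+3))^2/(2*α) + ((ν/(α^2+2*α+3))^2/(2*α) + ν)
          + ((ν/(α^2+2*α+3)+α)^2/(2*α) + ν))
        = (ν*(2*α^6+10*α^5+28*α^4+42*α^3+38*α^2+12*α)
            - (α^6+4*α^5+10*α^4+12*α^3+9*α^2))/(2*α*(α^2+2*α+3)^2) := by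
      field_simp
      ring
    rw [key]
    apply div_nonneg _ (by positivity)
    have h1 : (2*α^6+10*α^5+28*α^4+42*α^3+38*α^2+12*α)*1
        ≤ (2*α^6+10*α^5+28*α^4+42*α^3+38*α^2+12*α)*ν :=
      mul_le_mul_of_nonneg_left hν (by positivity)
    nlinarith [pow_pos hα0 2, pow_pos hα0 3, pow_pos hα0 4, pow_pos hα0 5, pow_pos hα0 6]
  refine le_trans ?_ hchain
  gcongr
end

section
/- For every integer a ≥ 2 there is a constant C = C(a) > 0 such that for every positive integer n the following explicit 2-coloring χ of [1,n] satisfies |M_{χ,a}(n) − n²/(2a(a²+2a+3))| ≤ C·n: color x red if x ≤ ⌊(a+1)n/(a²+2a+3)⌋, blue if ⌊(a+1)n/(a²+2a+3)⌋ < x ≤ ⌊(a²+2a+2)n/(a²+2a+3)⌋, and red if x > ⌊(a²+2a+2)n/(a²+2a+3)⌋ (i.e., the coloring whose red, blue, red interval lengths are proportional to 1, a + 1/(a+1), 1/(a+1)). -/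
/-- Triangle count: pairs `(x, y)` in `[1,n]²` with `x + a y ≤ m`. -/
def tri (a n m : ℕ) : ℕ :=
  ((Finset.Icc 1 n ×ˢ Finset.Icc 1 n).filter (fun p => p.1 + a * p.2 ≤ m)).card

lemma sum_Icc_cast (q : ℕ) : ∑ y ∈ Finset.Icc 1 q, (y : ℝ) = q * (q + 1) / 2 := by
  induction q with
  | zero => simp
  | succ q ih =>
    rw [Finset.sum_Icc_succ_top (by omega)]
    push_cast
    rw [ih]; ring

lemma tri_sum_bound (a n m T : ℕ) (ha : 2 ≤ a) (hm : m ≤ n)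
    (h : T = ∑ y ∈ Finset.Icc 1 n, (m - a * y)) :
    |(T : ℝ) - (m : ℝ) ^ 2 / (2 * a)| ≤ (a : ℝ) * m := by
  rcases Nat.eq_zero_or_pos m with rfl | hm1
  · have hT : T = 0 := by
      rw [h]; apply Finset.sum_eq_zero; intro y hy; omega
    rw [hT]; simp
  obtain ⟨q, haq, hm2, hqn⟩ : ∃ q, a * q ≤ m - 1 ∧ m - 1 < a * q + a ∧ q ≤ n := by
    refine ⟨(m - 1) / a, ?_, ?_, le_trans (Nat.div_le_self _ _) (by omega)⟩
    · rw [mul_comm]; exact Nat.div_mul_le_self _ _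
    · have h1 := Nat.div_add_mod (m - 1) a
      have h2 := Nat.mod_lt (m - 1) (show 0 < a by omega)
      omega
  have hsum : T = ∑ y ∈ Finset.Icc 1 q, (m - a * y) := by
    rw [h]
    refine (Finset.sum_subset (Finset.Icc_subset_Icc_right hqn) ?_).symm
    intro y hy hyn
    simp only [Finset.mem_Icc] at hy hyn
    have h3 : a * (q + 1) ≤ a * y := Nat.mul_le_mul_left a (by omega)
    rw [Nat.mul_succ] at h3
    omega
  have hcast : (T : ℝ) = ∑ y ∈ Finset.Icc 1 q, ((m : ℝ) - a * y) := by
    rw [hsum]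
    push_cast [Nat.cast_sum]
    refine Finset.sum_congr rfl fun y hy => ?_
    simp only [Finset.mem_Icc] at hy
    have h4 : a * y ≤ a * q := Nat.mul_le_mul_left a hy.2
    have : a * y ≤ m := by omega
    push_cast [Nat.cast_sub this]
    ring
  have hval : (T : ℝ) = q * m - a * (q * (q + 1) / 2) := by
    rw [hcast, Finset.sum_sub_distrib, Finset.sum_const, Nat.card_Icc, ← Finset.mul_sum,
      sum_Icc_cast]
    have : (1:ℕ) ≤ q + 1 := by omega
    push_cast [Nat.cast_sub this]
    ring
  have hq1 : (a : ℝ) * q ≤ (m : ℝ) - 1 := by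
    have h5 : a * q + 1 ≤ m := by omega
    have := Nat.cast_le (α := ℝ) |>.mpr h5
    push_cast at this
    linarith
  have hq2 : (m : ℝ) ≤ a * q + a := by
    have h6 : m ≤ a * q + a := by omega
    exact_mod_cast h6
  have ha' : (2:ℝ) ≤ a := by exact_mod_cast ha
  have hm1' : (1:ℝ) ≤ m := by exact_mod_cast hm1
  have hq0 : (0:ℝ) ≤ q := Nat.cast_nonneg q
  have h2a : (0:ℝ) < 2 * a := by linarith
  have key : (T : ℝ) - (m : ℝ) ^ 2 / (2 * a) =
      -((((m:ℝ) - a * q) ^ 2 + a ^ 2 * q) / (2 * a)) := by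
    rw [hval]; field_simp; ring
  rw [key, abs_neg, abs_of_nonneg (by positivity)]
  rw [div_le_iff₀ h2a]
  have t1 : (1:ℝ) ≤ (m:ℝ) - a * q := by linarith
  have t2 : (m:ℝ) - a * q ≤ a := by linarith
  nlinarith [mul_nonneg (by linarith : (0:ℝ) ≤ (m:ℝ) - a*q - 1) (by linarith : (0:ℝ) ≤ (a:ℝ) - ((m:ℝ) - a*q)),
    mul_le_mul_of_nonneg_left hq1 (by linarith : (0:ℝ) ≤ (a:ℝ)),
    mul_le_mul_of_nonneg_left hm1' (by positivity : (0:ℝ) ≤ (a:ℝ)*(a:ℝ)),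
    hm1', ha', hq0]

lemma tri_eq_sum (a n m : ℕ) (hm : m ≤ n) :
    tri a n m = ∑ y ∈ Finset.Icc 1 n, (m - a * y) := by
  unfold tri
  rw [Finset.card_eq_sum_card_fiberwise (f := Prod.snd) (t := Finset.Icc 1 n)
    (by intro p hp; simp only [Finset.mem_coe, Finset.mem_filter, Finset.mem_product] at hp; exact hp.1.2)]
  refine Finset.sum_congr rfl fun y hy => ?_
  rw [Finset.filter_filter]
  have : ((Finset.Icc 1 n ×ˢ Finset.Icc 1 n).filter (fun p => p.1 + a * p.2 ≤ m ∧ p.2 = y))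
      = (Finset.Icc 1 (m - a * y)).map ⟨fun x => (x, y), fun x₁ x₂ h => by
          simpa [Prod.ext_iff] using h⟩ := by
    ext p
    simp only [Finset.mem_filter, Finset.mem_product, Finset.mem_map, Finset.mem_Icc,
      Function.Embedding.coeFn_mk]
    constructor
    · rintro ⟨⟨hx, hy'⟩, hle, rfl⟩
      exact ⟨p.1, ⟨hx.1, by omega⟩, rfl⟩
    · rintro ⟨x, ⟨hx1, hx2⟩, rfl⟩
      simp only [Finset.mem_Icc] at hy
      show ((1 ≤ x ∧ x ≤ n) ∧ _) ∧ x + a * y ≤ m ∧ y = y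
      refine ⟨⟨⟨hx1, by omega⟩, hy⟩, by omega, rfl⟩
  rw [this, Finset.card_map, Nat.card_Icc]
  omega

lemma tri_bound (a n m : ℕ) (ha : 2 ≤ a) (hm : m ≤ n) :
    |(tri a n m : ℝ) - (m : ℝ) ^ 2 / (2 * a)| ≤ (a : ℝ) * m :=
  tri_sum_bound a n m _ ha hm (tri_eq_sum a n m hm)

lemma blue_block (a n r s : ℕ) (ha : 2 ≤ a) (h1 : s ≤ n) (h3 : (a + 1) * r ≤ s) :
    ((Finset.Icc 1 n ×ˢ Finset.Icc 1 n).filter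
      (fun p => r < p.1 ∧ r < p.2 ∧ p.1 + a * p.2 ≤ s)).card = tri a n (s - (a + 1) * r) := by
  have e1 : (a + 1) * r = a * r + r := by ring
  unfold tri
  apply Finset.card_bij' (fun p _ => (p.1 - r, p.2 - r)) (fun p _ => (p.1 + r, p.2 + r))
  case hi =>
    rintro ⟨x, y⟩ hp
    simp only [Finset.mem_filter, Finset.mem_product, Finset.mem_Icc] at hp ⊢
    obtain ⟨⟨⟨hx1, hx2⟩, hy1, hy2⟩, hrx, hry, hle⟩ := hp
    have hmul : a * (y - r) + a * r = a * y := by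
      rw [← Nat.mul_add]; congr 1; omega
    refine ⟨⟨⟨?_, ?_⟩, ?_, ?_⟩, ?_⟩ <;> omega
  case hj =>
    rintro ⟨x, y⟩ hp
    simp only [Finset.mem_filter, Finset.mem_product, Finset.mem_Icc] at hp ⊢
    obtain ⟨⟨⟨hx1, hx2⟩, hy1, hy2⟩, hle⟩ := hp
    have hmul : a * (y + r) = a * y + a * r := by rw [Nat.mul_add]
    have hay : a * 1 ≤ a * y := Nat.mul_le_mul_left a hy1
    have hyay : y ≤ a * y := Nat.le_mul_of_pos_left y (by omega)
    refine ⟨⟨⟨?_, ?_⟩, ?_, ?_⟩, ?_, ?_, ?_⟩ <;> omega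
  case left_inv =>
    rintro ⟨x, y⟩ hp
    simp only [Finset.mem_filter, Finset.mem_product, Finset.mem_Icc] at hp
    simp only [Prod.mk.injEq]
    omega
  case right_inv =>
    rintro ⟨x, y⟩ hp
    simp only [Finset.mem_filter, Finset.mem_product, Finset.mem_Icc] at hp
    simp only [Prod.mk.injEq]
    omega

lemma topred_block (a n r s : ℕ) (ha : 2 ≤ a) (h1 : s ≤ n) (h5 : n ≤ a * r + a + s) :
    ((Finset.Icc 1 n ×ˢ Finset.Icc 1 n).filter
      (fun p => s < p.1 ∧ p.2 ≤ r ∧ p.1 + a * p.2 ≤ n)).card = tri a n (n - s) := by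
  unfold tri
  apply Finset.card_bij' (fun p _ => (p.1 - s, p.2)) (fun p _ => (p.1 + s, p.2))
  case hi =>
    rintro ⟨x, y⟩ hp
    simp only [Finset.mem_filter, Finset.mem_product, Finset.mem_Icc] at hp ⊢
    obtain ⟨⟨⟨hx1, hx2⟩, hy1, hy2⟩, hsx, hyr, hle⟩ := hp
    refine ⟨⟨⟨?_, ?_⟩, ?_, ?_⟩, ?_⟩ <;> omega
  case hj =>
    rintro ⟨x, y⟩ hp
    simp only [Finset.mem_filter, Finset.mem_product, Finset.mem_Icc] at hp ⊢
    obtain ⟨⟨⟨hx1, hx2⟩, hy1, hy2⟩, hle⟩ := hp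
    have hay : a * 1 ≤ a * y := Nat.mul_le_mul_left a hy1
    have hyay : y ≤ a * y := Nat.le_mul_of_pos_left y (by omega)
    have hyr : y ≤ r := by
      by_contra hc
      have h6 : a * (r + 1) ≤ a * y := Nat.mul_le_mul_left a (by omega)
      rw [Nat.mul_succ] at h6
      omega
    refine ⟨⟨⟨?_, ?_⟩, ?_, ?_⟩, ?_, ?_, ?_⟩ <;> omega
  case left_inv =>
    rintro ⟨x, y⟩ hp
    simp only [Finset.mem_filter, Finset.mem_product, Finset.mem_Icc] at hp
    simp only [Prod.mk.injEq]
    exact ⟨by omega, trivial⟩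
  case right_inv =>
    rintro ⟨x, y⟩ hp
    simp only [Finset.mem_filter, Finset.mem_product, Finset.mem_Icc] at hp
    simp only [Prod.mk.injEq]
    exact ⟨by omega, trivial⟩

lemma decomp (a n r s : ℕ) (ha : 2 ≤ a)
    (h1 : s ≤ n)
    (h3 : (a + 1) * r ≤ s)
    (h4 : n ≤ a * s + a)
    (h5 : n ≤ a * r + a + s) :
    monoTriples a n (fun x => decide (x ≤ r ∨ s < x))
      = tri a n r + tri a n (s - (a + 1) * r) + tri a n (n - s) := by
  have e1 : (a + 1) * r = a * r + r := by ring
  have hrs : r ≤ s := by omega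
  unfold monoTriples
  have hcongr : ((Finset.Icc 1 n ×ˢ Finset.Icc 1 n).filter
      (fun p => p.1 + a * p.2 ≤ n ∧
        (decide (p.1 ≤ r ∨ s < p.1) = decide (p.2 ≤ r ∨ s < p.2)) ∧
        (decide (p.2 ≤ r ∨ s < p.2) = decide (p.1 + a * p.2 ≤ r ∨ s < p.1 + a * p.2))))
      = ((Finset.Icc 1 n ×ˢ Finset.Icc 1 n).filter
        (fun p => p.1 + a * p.2 ≤ r ∨
          ((r < p.1 ∧ r < p.2 ∧ p.1 + a * p.2 ≤ s) ∨
           (s < p.1 ∧ p.2 ≤ r ∧ p.1 + a * p.2 ≤ n)))) := by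
    apply Finset.filter_congr
    intro p hp
    simp only [Finset.mem_product, Finset.mem_Icc] at hp
    obtain ⟨⟨hx1, hx2⟩, hy1, hy2⟩ := hp
    obtain ⟨x, y⟩ := p
    simp only [decide_eq_decide]
    dsimp only at *
    have hyay : y ≤ a * y := Nat.le_mul_of_pos_left y (by omega)
    rcases le_or_gt y r with hc | hc
    · have hay : a * y ≤ a * r := Nat.mul_le_mul_left a hc
      omega
    · rcases le_or_gt y s with hc2 | hc2
      · omega
      · have hay : a * (s + 1) ≤ a * y := Nat.mul_le_mul_left a hc2
        rw [Nat.mul_succ] at hay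
        omega
  rw [hcongr]
  rw [Finset.filter_or, Finset.filter_or]
  rw [Finset.card_union_of_disjoint, Finset.card_union_of_disjoint]
  · rw [blue_block a n r s ha h1 h3, topred_block a n r s ha h1 h5]
    have cA : ((Finset.Icc 1 n ×ˢ Finset.Icc 1 n).filter
        (fun p => p.1 + a * p.2 ≤ r)).card = tri a n r := rfl
    rw [cA, add_assoc]
  · simp only [Finset.disjoint_left, Finset.mem_filter, Finset.mem_product, Finset.mem_Icc]
    rintro p ⟨⟨⟨hx1, hx2⟩, hy1, hy2⟩, hrx, hry, hle⟩ ⟨_, hsx, _⟩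
    omega
  · simp only [Finset.disjoint_left, Finset.mem_union, Finset.mem_filter, Finset.mem_product,
      Finset.mem_Icc]
    rintro p ⟨⟨⟨hx1, hx2⟩, hy1, hy2⟩, hle⟩ h
    have hyay : p.2 ≤ a * p.2 := Nat.le_mul_of_pos_left p.2 (by omega)
    rcases h with ⟨_, hrx, _⟩ | ⟨_, hsx, _⟩ <;> omega

lemma div_facts (a n D r s : ℕ) (ha : 2 ≤ a) (hD : D = a^2+2*a+3)
    (hr : r = (a+1)*n/D) (hs : s = (a^2+2*a+2)*n/D) :
    (a+1)*n < D*r + D ∧ (a^2+2*a+2)*n < D*s + D ∧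
    s ≤ n ∧ (a+1)*r ≤ s ∧ n ≤ a*s+a ∧ (D ≤ n → n ≤ a*r+a+s) := by
  have hD0 : 0 < D := by rw [hD]; positivity
  have hdr : (a+1)*n < D*r + D := by
    have h1 := Nat.div_add_mod ((a+1)*n) D
    have h2 := Nat.mod_lt ((a+1)*n) hD0
    rw [← hr] at h1
    omega
  have hds : (a^2+2*a+2)*n < D*s + D := by
    have h1 := Nat.div_add_mod ((a^2+2*a+2)*n) D
    have h2 := Nat.mod_lt ((a^2+2*a+2)*n) hD0
    rw [← hs] at h1
    omega
  refine ⟨hdr, hds, ?_, ?_, ?_, ?_⟩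
  · rw [hs]
    calc (a^2+2*a+2)*n/D ≤ D*n/D := Nat.div_le_div_right (Nat.mul_le_mul_right n (by nlinarith))
    _ = n := Nat.mul_div_cancel_left n hD0
  · rw [hr, hs]
    calc (a+1)*((a+1)*n/D) ≤ (a+1)*((a+1)*n)/D := Nat.mul_div_le_mul_div_assoc _ _ _
    _ ≤ (a^2+2*a+2)*n/D := Nat.div_le_div_right (by nlinarith)
  · have k1 : D*n ≤ a*((a^2+2*a+2)*n) := by
      calc D*n ≤ (a*(a^2+2*a+2))*n := Nat.mul_le_mul_right n (by nlinarith)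
      _ = a*((a^2+2*a+2)*n) := by ring
    have k2 : a*((a^2+2*a+2)*n) < a*(D*s+D) :=
      mul_lt_mul_of_pos_left hds (show 0 < a by omega)
    have k3 : D*n < D*(a*s+a) := by
      calc D*n ≤ a*((a^2+2*a+2)*n) := k1
      _ < a*(D*s+D) := k2
      _ = D*(a*s+a) := by ring
    have := lt_of_mul_lt_mul_left k3 (Nat.zero_le D)
    omega
  · intro hn
    have t2 : (D+1)*n ≤ (2*a^2+3*a+2)*n := Nat.mul_le_mul_right n (by nlinarith)
    have k1 : D*(n+1) ≤ (2*a^2+3*a+2)*n := by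
      have : D*(n+1) = D*n + D := by ring
      have h3 : (D+1)*n = D*n + n := by ring
      omega
    have k2 : (2*a^2+3*a+2)*n = a*((a+1)*n) + (a^2+2*a+2)*n := by ring
    have k3 : a*((a+1)*n) < a*(D*r+D) := mul_lt_mul_of_pos_left hdr (show 0 < a by omega)
    have k4 : D*(n+1) < D*(a*r+a+s+1) := by
      calc D*(n+1) ≤ (2*a^2+3*a+2)*n := k1
      _ = a*((a+1)*n) + (a^2+2*a+2)*n := k2
      _ < a*(D*r+D) + (D*s+D) := Nat.add_lt_add k3 hds
      _ = D*(a*r+a+s+1) := by ring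
    have := lt_of_mul_lt_mul_left k4 (Nat.zero_le D)
    omega

set_option maxHeartbeats 1000000 in
lemma final_real (a n T1 T2 T3 R S M2 M3 C1 CS : ℝ)
    (ha : 2 ≤ a)
    (hC1 : C1 = (a+1)*n/(a^2+2*a+3)) (hCS : CS = (a^2+2*a+2)*n/(a^2+2*a+3))
    (hRub : R ≤ C1) (hRlb : C1 < R + 1)
    (hSub : S ≤ CS) (hSlb : CS < S + 1)
    (hM2 : M2 = S - (a+1)*R) (hM3 : M3 = n - S)
    (hT1 : |T1 - R^2/(2*a)| ≤ a*R) (hT2 : |T2 - M2^2/(2*a)| ≤ a*M2)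
    (hT3 : |T3 - M3^2/(2*a)| ≤ a*M3)
    (hRn : R ≤ n) (hM2n : M2 ≤ n) (hM3n : M3 ≤ n) (hn : 0 ≤ n)
    (hR0 : 0 ≤ R) (hM20 : 0 ≤ M2) (hM30 : 0 ≤ M3) :
    |T1+T2+T3 - n^2/(2*a*(a^2+2*a+3))| ≤ (2*a^2+10*a+12)*n := by
  have hDR : (0:ℝ) < a^2+2*a+3 := by nlinarith
  have ha0 : (0:ℝ) < a := by linarith
  set c2 : ℝ := n/(a^2+2*a+3) with hc2
  have hc20 : 0 ≤ c2 := by positivity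
  have hc2n : c2 ≤ n := by
    rw [hc2, div_le_iff₀ hDR]; nlinarith
  have hC10 : 0 ≤ C1 := by rw [hC1]; positivity
  have hC1n : C1 ≤ n := by rw [hC1, div_le_iff₀ hDR]; nlinarith
  have hCS0 : 0 ≤ CS := by rw [hCS]; positivity
  have hCSn : CS ≤ n := by rw [hCS, div_le_iff₀ hDR]; nlinarith
  have he1 : |R - C1| ≤ 1 := abs_le.mpr ⟨by linarith, by linarith⟩
  have heS : |S - CS| ≤ 1 := abs_le.mpr ⟨by linarith, by linarith⟩
  have he2 : |M2 - c2| ≤ a + 2 := by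
    have idc : CS - (a+1)*C1 = c2 := by rw [hC1, hCS, hc2]; field_simp; ring
    have hid : M2 - c2 = (S - CS) - (a+1)*(R - C1) := by
      rw [hM2, ← idc]; ring
    rw [hid]
    calc |(S - CS) - (a+1)*(R - C1)| ≤ |S - CS| + |(a+1)*(R - C1)| := abs_sub _ _
    _ = |S - CS| + (a+1)*|R - C1| := by rw [abs_mul, abs_of_pos (by linarith : (0:ℝ) < a+1)]
    _ ≤ 1 + (a+1)*1 := by
        have := mul_le_mul_of_nonneg_left he1 (by linarith : (0:ℝ) ≤ a+1)
        linarith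
    _ ≤ a + 2 := by linarith
  have he3 : |M3 - c2| ≤ a + 2 := by
    have hid : M3 - c2 = CS - S := by
      rw [hM3, hCS, hc2]; field_simp; ring
    rw [hid, abs_sub_comm]
    linarith [heS]
  have he1' : |R - C1| ≤ a + 2 := by linarith
  have block : ∀ T m c : ℝ, |T - m^2/(2*a)| ≤ a*m → |m - c| ≤ a + 2 →
      0 ≤ m → m ≤ n → 0 ≤ c → c ≤ n → |2*a*T - c^2| ≤ 2*a^2*n + 2*(a+2)*n := by
    intro T m c hT he hm0 hmn hc0 hcn
    have hU : |2*a*T - m^2| ≤ 2*a^2*n := by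
      have hid : 2*a*T - m^2 = (2*a)*(T - m^2/(2*a)) := by field_simp
      rw [hid, abs_mul, abs_of_pos (by linarith : (0:ℝ) < 2*a)]
      have h1 : (2*a)*|T - m^2/(2*a)| ≤ (2*a)*(a*m) :=
        mul_le_mul_of_nonneg_left hT (by linarith)
      have h2 : (2*a)*(a*m) ≤ 2*a^2*n := by
        calc (2*a)*(a*m) = 2*a^2*m := by ring
        _ ≤ 2*a^2*n := mul_le_mul_of_nonneg_left hmn (by positivity)
      linarith
    have hV : |m^2 - c^2| ≤ (a+2)*(2*n) := by
      obtain ⟨hl, hu⟩ := abs_le.mp he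
      rw [abs_le]
      constructor <;> nlinarith [mul_nonneg (by linarith : (0:ℝ) ≤ (a+2) - (m - c)) (by linarith : (0:ℝ) ≤ m + c),
        mul_nonneg (by linarith : (0:ℝ) ≤ (a+2) + (m - c)) (by linarith : (0:ℝ) ≤ m + c)]
    calc |2*a*T - c^2| ≤ |2*a*T - m^2| + |m^2 - c^2| := abs_sub_le _ _ _
    _ ≤ 2*a^2*n + (a+2)*(2*n) := by linarith
    _ = 2*a^2*n + 2*(a+2)*n := by ring
  have hB1 := block T1 R C1 hT1 he1' hR0 hRn hC10 hC1n
  have hB2 := block T2 M2 c2 hT2 he2 hM20 hM2n hc20 hc2n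
  have hB3 := block T3 M3 c2 hT3 he3 hM30 hM3n hc20 hc2n
  have hsum : |2*a*(T1+T2+T3) - (C1^2 + c2^2 + c2^2)| ≤ 3*(2*a^2*n + 2*(a+2)*n) := by
    have h := abs_add_le (2*a*T1 - C1^2 + (2*a*T2 - c2^2)) (2*a*T3 - c2^2)
    have h2 := abs_add_le (2*a*T1 - C1^2) (2*a*T2 - c2^2)
    have hid : 2*a*(T1+T2+T3) - (C1^2 + c2^2 + c2^2)
        = (2*a*T1 - C1^2 + (2*a*T2 - c2^2)) + (2*a*T3 - c2^2) := by ring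
    rw [hid]
    linarith
  have idsum : C1^2 + c2^2 + c2^2 = n^2/(a^2+2*a+3) := by
    rw [hC1, hc2]
    field_simp
    ring
  rw [idsum] at hsum
  have hfin : T1+T2+T3 - n^2/(2*a*(a^2+2*a+3))
      = (2*a*(T1+T2+T3) - n^2/(a^2+2*a+3))/(2*a) := by
    field_simp
  rw [hfin, abs_div, abs_of_pos (by linarith : (0:ℝ) < 2*a), div_le_iff₀ (by linarith : (0:ℝ) < 2*a)]
  have hpoly : (0:ℝ) ≤ (4*a^3+14*a^2+18*a-12)*n := mul_nonneg (by nlinarith) hn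
  nlinarith [hsum, hpoly]

set_option maxHeartbeats 2000000 in
/-- The explicit red-blue-red coloring with interval lengths proportional to
`1, a + 1/(a+1), 1/(a+1)` (i.e. red up to `⌊(a+1)n/(a²+2a+3)⌋`, blue up to
`⌊(a²+2a+2)n/(a²+2a+3)⌋`, red afterwards) has
`n² / (2a(a² + 2a + 3)) + O(n)` monochromatic `(x, y, x + a*y)` triples. -/
theorem explicit_coloring_monoTriples (a : ℕ) (ha : 2 ≤ a) :
    ∃ C : ℝ, 0 < C ∧ ∀ n : ℕ, 0 < n →
      |(monoTriples a n (fun x =>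
          decide (x ≤ (a + 1) * n / (a ^ 2 + 2 * a + 3) ∨
            (a ^ 2 + 2 * a + 2) * n / (a ^ 2 + 2 * a + 3) < x)) : ℝ)
        - (n : ℝ) ^ 2 / (2 * a * ((a : ℝ) ^ 2 + 2 * a + 3))| ≤ C * n := by
  have haR : (2:ℝ) ≤ (a:ℝ) := by exact_mod_cast ha
  refine ⟨2*(a:ℝ)^2 + 10*(a:ℝ) + 12, by positivity, ?_⟩
  intro n hn
  obtain ⟨hdr, hds, h1, h3, h4, h5'⟩ :=
    div_facts a n (a^2+2*a+3) ((a+1)*n/(a^2+2*a+3)) ((a^2+2*a+2)*n/(a^2+2*a+3)) ha rfl rfl rfl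
  have hDR : (0:ℝ) < (a:ℝ)^2+2*(a:ℝ)+3 := by nlinarith
  rcases lt_or_ge n (a^2+2*a+3) with hsmall | hbig
  · -- small n : trivial bound
    have hM : monoTriples a n (fun x =>
        decide (x ≤ (a + 1) * n / (a ^ 2 + 2 * a + 3) ∨
          (a ^ 2 + 2 * a + 2) * n / (a ^ 2 + 2 * a + 3) < x)) ≤ n * n := by
      refine le_trans (Finset.card_filter_le _ _) ?_
      rw [Finset.card_product, Nat.card_Icc]
      have hcard : n + 1 - 1 = n := by omega
      rw [hcard]
    have hMr : (monoTriples a n (fun x =>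
        decide (x ≤ (a + 1) * n / (a ^ 2 + 2 * a + 3) ∨
          (a ^ 2 + 2 * a + 2) * n / (a ^ 2 + 2 * a + 3) < x)) : ℝ) ≤ (n:ℝ) * n := by
      exact_mod_cast hM
    have hM0 : (0:ℝ) ≤ (monoTriples a n (fun x =>
        decide (x ≤ (a + 1) * n / (a ^ 2 + 2 * a + 3) ∨
          (a ^ 2 + 2 * a + 2) * n / (a ^ 2 + 2 * a + 3) < x)) : ℝ) := Nat.cast_nonneg _
    have hc0 : (0:ℝ) ≤ (n:ℝ)^2 / (2*(a:ℝ)*((a:ℝ)^2+2*(a:ℝ)+3)) := by positivity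
    have hn0 : (0:ℝ) ≤ (n:ℝ) := Nat.cast_nonneg n
    have hcn : (n:ℝ)^2 / (2*(a:ℝ)*((a:ℝ)^2+2*(a:ℝ)+3)) ≤ (n:ℝ)*n := by
      rw [div_le_iff₀ (by nlinarith : (0:ℝ) < 2*(a:ℝ)*((a:ℝ)^2+2*(a:ℝ)+3))]
      have h2 : (0:ℝ) ≤ ((n:ℝ)*(n:ℝ))*(2*(a:ℝ)*((a:ℝ)^2+2*(a:ℝ)+3) - 1) :=
        mul_nonneg (mul_nonneg hn0 hn0) (by nlinarith)
      nlinarith [h2]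
    have hnD : (n:ℝ) ≤ (a:ℝ)^2+2*(a:ℝ)+3 := by
      have : n ≤ a^2+2*a+3 := le_of_lt hsmall
      exact_mod_cast this
    rw [abs_le]
    constructor
    · have : (n:ℝ)*n ≤ (2*(a:ℝ)^2 + 10*(a:ℝ) + 12)*n := by nlinarith
      linarith
    · have : (n:ℝ)*n ≤ (2*(a:ℝ)^2 + 10*(a:ℝ) + 12)*n := by nlinarith
      linarith
  · -- main case
    rw [decomp a n ((a+1)*n/(a^2+2*a+3)) ((a^2+2*a+2)*n/(a^2+2*a+3)) ha h1 h3 h4 (h5' hbig)]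
    have hrs : (a+1)*n/(a^2+2*a+3) ≤ (a^2+2*a+2)*n/(a^2+2*a+3) := by
      have := Nat.le_mul_of_pos_left ((a+1)*n/(a^2+2*a+3)) (show 0 < a+1 by omega)
      omega
    have hrn : (a+1)*n/(a^2+2*a+3) ≤ n := le_trans hrs h1
    have hm2n : (a^2+2*a+2)*n/(a^2+2*a+3) - (a+1)*((a+1)*n/(a^2+2*a+3)) ≤ n :=
      le_trans (Nat.sub_le _ _) h1
    have hm3n : n - (a^2+2*a+2)*n/(a^2+2*a+3) ≤ n := Nat.sub_le _ _
    have hT1 := tri_bound a n ((a+1)*n/(a^2+2*a+3)) ha hrn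
    have hT2 := tri_bound a n
      ((a^2+2*a+2)*n/(a^2+2*a+3) - (a+1)*((a+1)*n/(a^2+2*a+3))) ha hm2n
    have hT3 := tri_bound a n (n - (a^2+2*a+2)*n/(a^2+2*a+3)) ha hm3n
    have hRub : ((((a+1)*n/(a^2+2*a+3) : ℕ)) : ℝ) ≤ ((a:ℝ)+1)*(n:ℝ)/((a:ℝ)^2+2*(a:ℝ)+3) := by
      have h := Nat.cast_div_le (α := ℝ) (m := (a+1)*n) (n := a^2+2*a+3)
      push_cast at h
      exact h
    have hSub : ((((a^2+2*a+2)*n/(a^2+2*a+3) : ℕ)) : ℝ)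
        ≤ ((a:ℝ)^2+2*(a:ℝ)+2)*(n:ℝ)/((a:ℝ)^2+2*(a:ℝ)+3) := by
      have h := Nat.cast_div_le (α := ℝ) (m := (a^2+2*a+2)*n) (n := a^2+2*a+3)
      push_cast at h
      exact h
    have hRlb : ((a:ℝ)+1)*(n:ℝ)/((a:ℝ)^2+2*(a:ℝ)+3) < (((a+1)*n/(a^2+2*a+3) : ℕ) : ℝ) + 1 := by
      rw [div_lt_iff₀ hDR]
      have hdr' : ((a:ℝ)+1)*(n:ℝ) < ((a:ℝ)^2+2*(a:ℝ)+3)*(((a+1)*n/(a^2+2*a+3) : ℕ) : ℝ)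
          + ((a:ℝ)^2+2*(a:ℝ)+3) := by exact_mod_cast hdr
      nlinarith [hdr']
    have hSlb : ((a:ℝ)^2+2*(a:ℝ)+2)*(n:ℝ)/((a:ℝ)^2+2*(a:ℝ)+3)
        < (((a^2+2*a+2)*n/(a^2+2*a+3) : ℕ) : ℝ) + 1 := by
      rw [div_lt_iff₀ hDR]
      have hds' : ((a:ℝ)^2+2*(a:ℝ)+2)*(n:ℝ)
          < ((a:ℝ)^2+2*(a:ℝ)+3)*(((a^2+2*a+2)*n/(a^2+2*a+3) : ℕ) : ℝ)
          + ((a:ℝ)^2+2*(a:ℝ)+3) := by exact_mod_cast hds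
      nlinarith [hds']
    have hM2cast : (((a^2+2*a+2)*n/(a^2+2*a+3) - (a+1)*((a+1)*n/(a^2+2*a+3)) : ℕ) : ℝ)
        = (((a^2+2*a+2)*n/(a^2+2*a+3) : ℕ) : ℝ)
          - ((a:ℝ)+1)*(((a+1)*n/(a^2+2*a+3) : ℕ) : ℝ) := by
      rw [Nat.cast_sub h3]
      push_cast
      ring
    have hM3cast : ((n - (a^2+2*a+2)*n/(a^2+2*a+3) : ℕ) : ℝ)
        = (n:ℝ) - (((a^2+2*a+2)*n/(a^2+2*a+3) : ℕ) : ℝ) := by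
      rw [Nat.cast_sub h1]
    have key := final_real (a:ℝ) (n:ℝ)
      ((tri a n ((a+1)*n/(a^2+2*a+3)) : ℕ) : ℝ)
      ((tri a n ((a^2+2*a+2)*n/(a^2+2*a+3) - (a+1)*((a+1)*n/(a^2+2*a+3))) : ℕ) : ℝ)
      ((tri a n (n - (a^2+2*a+2)*n/(a^2+2*a+3)) : ℕ) : ℝ)
      ((((a+1)*n/(a^2+2*a+3) : ℕ)) : ℝ)
      ((((a^2+2*a+2)*n/(a^2+2*a+3) : ℕ)) : ℝ)
      (((a^2+2*a+2)*n/(a^2+2*a+3) - (a+1)*((a+1)*n/(a^2+2*a+3)) : ℕ) : ℝ)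
      ((n - (a^2+2*a+2)*n/(a^2+2*a+3) : ℕ) : ℝ)
      (((a:ℝ)+1)*(n:ℝ)/((a:ℝ)^2+2*(a:ℝ)+3))
      (((a:ℝ)^2+2*(a:ℝ)+2)*(n:ℝ)/((a:ℝ)^2+2*(a:ℝ)+3))
      haR rfl rfl hRub hRlb hSub hSlb
      hM2cast hM3cast hT1 hT2 hT3
      (by exact_mod_cast hrn) (by exact_mod_cast hm2n) (by exact_mod_cast hm3n)
      (Nat.cast_nonneg n) (Nat.cast_nonneg _) (Nat.cast_nonneg _) (Nat.cast_nonneg _)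
    have hc : ((tri a n ((a+1)*n/(a^2+2*a+3))
        + tri a n ((a^2+2*a+2)*n/(a^2+2*a+3) - (a+1)*((a+1)*n/(a^2+2*a+3)))
        + tri a n (n - (a^2+2*a+2)*n/(a^2+2*a+3)) : ℕ) : ℝ)
        = ((tri a n ((a+1)*n/(a^2+2*a+3)) : ℕ) : ℝ)
        + ((tri a n ((a^2+2*a+2)*n/(a^2+2*a+3) - (a+1)*((a+1)*n/(a^2+2*a+3))) : ℕ) : ℝ)
        + ((tri a n (n - (a^2+2*a+2)*n/(a^2+2*a+3)) : ℕ) : ℝ) := by push_cast; ring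
    rw [hc]
    exact key
end

section
/- (Lemma 1) Let a ≥ 2 be an integer, let n be a positive integer divisible by a, and let χ be a 2-coloring of [1,n]. Then the number of pairs (x,y) with 1 ≤ x < y ≤ n, y − x divisible by a, and χ(x) ≠ χ(y) is at most |R|·|B|/a, where |R| and |B| are the numbers of red and blue elements of {1,…,n}. -/
open Finset
private lemma class_card (a n i : ℕ) (ha : 0 < a) (hdvd : a ∣ n) (hi : i < a) :
    ((Icc 1 n).filter (fun x => x % a = i)).card = n / a := by
  obtain ⟨m, rfl⟩ := hdvd
  rw [Nat.mul_div_cancel_left _ ha]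
  have key : ((Icc 1 (a * m)).filter (fun x => x % a = i)).card = (range m).card := by
    apply Finset.card_bij' (fun x _ => (x - 1) / a)
      (fun k _ => a * k + (if i = 0 then a else i))
    · intro x hx
      simp only [mem_filter, mem_Icc] at hx
      simp only [mem_range]
      exact Nat.div_lt_of_lt_mul (by omega)
    · intro k hk
      simp only [mem_range] at hk
      simp only [mem_filter, mem_Icc]
      have hkm : a * (k + 1) ≤ a * m := Nat.mul_le_mul_left a (by omega)
      rw [Nat.mul_succ] at hkm
      split_ifs with h
      · exact ⟨⟨by omega, by omega⟩, by simp [h, Nat.mul_add_mod]⟩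
      · exact ⟨⟨by omega, by omega⟩, by simp [Nat.mul_add_mod, Nat.mod_eq_of_lt hi]⟩
    · intro x hx
      simp only [mem_filter, mem_Icc] at hx
      obtain ⟨⟨h1, h2⟩, h3⟩ := hx
      have hq : x = a * (x / a) + x % a := (Nat.div_add_mod x a).symm
      split_ifs with h
      · have hx0 : x = a * (x / a) := by omega
        have hq1 : 1 ≤ x / a := by
          rcases Nat.eq_zero_or_pos (x / a) with h0 | h0
          · rw [h0, Nat.mul_zero] at hx0; omega
          · exact h0
        have hge : a * 1 ≤ a * (x / a) := Nat.mul_le_mul_left a hq1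
        rw [Nat.mul_one] at hge
        have hma : a * (x / a - 1) + a = a * (x / a) := by
          rw [Nat.mul_sub_one]; omega
        have hsub : x - 1 = a * (x / a - 1) + (a - 1) := by omega
        have hd0 : (a - 1) / a = 0 := Nat.div_eq_of_lt (by omega)
        have hdiv : (x - 1) / a = x / a - 1 := by
          rw [hsub, Nat.mul_add_div ha, hd0]; omega
        rw [hdiv]
        omega
      · have hsub : x - 1 = a * (x / a) + (i - 1) := by omega
        have hd0 : (i - 1) / a = 0 := Nat.div_eq_of_lt (by omega)
        have hdiv : (x - 1) / a = x / a := by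
          rw [hsub, Nat.mul_add_div ha, hd0]; omega
        rw [hdiv]
        omega
    · intro k hk
      simp only [mem_range] at hk
      split_ifs with h
      · have h1 : a * k + a - 1 = a * k + (a - 1) := by omega
        rw [h1, Nat.mul_add_div ha, Nat.div_eq_of_lt (by omega)]; omega
      · have h1 : a * k + i - 1 = a * k + (i - 1) := by omega
        rw [h1, Nat.mul_add_div ha, Nat.div_eq_of_lt (by omega)]; omega
  simpa using key

private lemma pair_count (a n i : ℕ) (χ : ℕ → Bool) :
    ((((Icc 1 n) ×ˢ (Icc 1 n)).filter
        (fun p => p.1 < p.2 ∧ a ∣ p.2 - p.1 ∧ χ p.1 ≠ χ p.2)).filter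
        (fun p => p.1 % a = i)).card
      = ((Icc 1 n).filter (fun x => χ x = true ∧ x % a = i)).card *
        ((Icc 1 n).filter (fun x => χ x = false ∧ x % a = i)).card := by
  rw [← Finset.card_product]
  apply Finset.card_bij' (fun p _ => if χ p.1 = true then p else (p.2, p.1))
    (fun q _ => if q.1 < q.2 then q else (q.2, q.1))
  · intro p hp
    simp only [mem_filter, mem_product, mem_Icc] at hp ⊢
    obtain ⟨⟨⟨hx, hy⟩, hlt, hdvd', hne⟩, hmod⟩ := hp
    have hymod : p.2 % a = i := by
      have := (Nat.modEq_iff_dvd' (le_of_lt hlt)).2 hdvd'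
      unfold Nat.ModEq at this; omega
    by_cases hc : χ p.1 = true
    · have hcy : χ p.2 = false := by
        cases hxy : χ p.2
        · rfl
        · rw [hc, hxy] at hne; exact absurd rfl hne
      simp [hc, hcy, hmod, hymod, hx, hy]
    · have hcx : χ p.1 = false := by cases hxy : χ p.1 <;> simp_all
      have hcy : χ p.2 = true := by
        cases hxy : χ p.2
        · rw [hcx, hxy] at hne; exact absurd rfl hne
        · rfl
      simp [hc, hcy, hcx, hmod, hymod, hx, hy]
  · intro q hq
    simp only [mem_filter, mem_product, mem_Icc] at hq ⊢
    obtain ⟨⟨⟨hr1, hr2⟩, hrc, hrm⟩, ⟨⟨hb1, hb2⟩, hbc, hbm⟩⟩ := hq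
    have hne : q.1 ≠ q.2 := by intro h; rw [h, hbc] at hrc; exact absurd hrc (by simp)
    by_cases hlt : q.1 < q.2
    · have hdvd' : a ∣ q.2 - q.1 := (Nat.modEq_iff_dvd' (le_of_lt hlt)).1 (by
        unfold Nat.ModEq; omega)
      simp [hlt, hr1, hr2, hb1, hb2, hrm, hdvd', hrc, hbc]
    · have hlt' : q.2 < q.1 := by omega
      have hdvd' : a ∣ q.1 - q.2 := (Nat.modEq_iff_dvd' (le_of_lt hlt')).1 (by
        unfold Nat.ModEq; omega)
      simp [hlt, hlt', hb1, hb2, hr1, hr2, hbm, hdvd', hrc, hbc]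
  · intro p hp
    simp only [mem_filter, mem_product, mem_Icc] at hp
    obtain ⟨⟨⟨hx, hy⟩, hlt, hdvd', hne⟩, hmod⟩ := hp
    by_cases hc : χ p.1 = true
    · simp [hc, hlt]
    · simp [hc, Nat.lt_asymm hlt, Nat.not_lt_of_lt hlt]
  · intro q hq
    simp only [mem_filter, mem_product, mem_Icc] at hq
    obtain ⟨⟨⟨hr1, hr2⟩, hrc, hrm⟩, ⟨⟨hb1, hb2⟩, hbc, hbm⟩⟩ := hq
    by_cases hlt : q.1 < q.2
    · simp [hlt, hrc]
    · simp [hlt, hbc]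

/-- (Lemma 1) Let `a ≥ 2`, let `a ∣ n`, and let `χ` be a 2-coloring of `[1,n]`
(`true` = red, `false` = blue). The number of pairs `(x, y)` with
`1 ≤ x < y ≤ n`, `a ∣ y − x`, and `χ x ≠ χ y` is at most `|R|·|B| / a`. -/
theorem nonmono_diff_divisible_le (a n : ℕ) (ha : 2 ≤ a) (hn : 0 < n)
    (hdvd : a ∣ n) (χ : ℕ → Bool) :
    (((Finset.Icc 1 n ×ˢ Finset.Icc 1 n).filter
        (fun p => p.1 < p.2 ∧ a ∣ p.2 - p.1 ∧ χ p.1 ≠ χ p.2)).card : ℝ) ≤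
      (((Finset.Icc 1 n).filter (fun x => χ x = true)).card : ℝ) *
        (((Finset.Icc 1 n).filter (fun x => χ x = false)).card : ℝ) / a := by
  have ha0 : 0 < a := by omega
  set m := n / a with hm
  have hnm : n = a * m := by rw [hm, Nat.mul_div_cancel' hdvd]
  set r : ℕ → ℕ := fun i => ((Icc 1 n).filter (fun x => χ x = true ∧ x % a = i)).card with hr
  set b : ℕ → ℕ := fun i => ((Icc 1 n).filter (fun x => χ x = false ∧ x % a = i)).card with hb
  have hPcard : (((Icc 1 n) ×ˢ (Icc 1 n)).filter
      (fun p => p.1 < p.2 ∧ a ∣ p.2 - p.1 ∧ χ p.1 ≠ χ p.2)).card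
      = ∑ i ∈ range a, (r i) * (b i) := by
    rw [Finset.card_eq_sum_card_fiberwise (f := fun p => p.1 % a) (t := range a)
      (fun p _ => mem_range.2 (Nat.mod_lt _ ha0))]
    exact Finset.sum_congr rfl (fun i _ => pair_count a n i χ)
  have hRsum : ((Icc 1 n).filter (fun x => χ x = true)).card = ∑ i ∈ range a, r i := by
    rw [Finset.card_eq_sum_card_fiberwise (f := fun x => x % a) (t := range a)
      (fun x _ => mem_range.2 (Nat.mod_lt _ ha0))]
    exact Finset.sum_congr rfl (fun i _ => by rw [Finset.filter_filter])
  have hBsum : ((Icc 1 n).filter (fun x => χ x = false)).card = ∑ i ∈ range a, b i := by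
    rw [Finset.card_eq_sum_card_fiberwise (f := fun x => x % a) (t := range a)
      (fun x _ => mem_range.2 (Nat.mod_lt _ ha0))]
    exact Finset.sum_congr rfl (fun i _ => by rw [Finset.filter_filter])
  have hclass : ∀ i ∈ range a, r i + b i = m := by
    intro i hi
    have hci := class_card a n i ha0 hdvd (mem_range.1 hi)
    have h1 : r i = (((Icc 1 n).filter (fun x => x % a = i)).filter
        (fun x => χ x = true)).card := by
      rw [Finset.filter_filter]
      apply congrArg Finset.card
      exact Finset.filter_congr (fun x _ => by tauto)
    have h2 : b i = (((Icc 1 n).filter (fun x => x % a = i)).filter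
        (fun x => ¬ (χ x = true))).card := by
      rw [Finset.filter_filter]
      apply congrArg Finset.card
      refine Finset.filter_congr (fun x _ => ?_)
      simp only [Bool.not_eq_true]
      tauto
    rw [h1, h2, Finset.card_filter_add_card_filter_not, hci]
  rw [hPcard, hRsum, hBsum]
  push_cast
  have hcauchy : (∑ i ∈ range a, (r i : ℝ)) ^ 2
      ≤ (a : ℝ) * ∑ i ∈ range a, (r i : ℝ) ^ 2 := by
    have := sq_sum_le_card_mul_sum_sq (s := range a) (f := fun i => (r i : ℝ))
    simpa using this
  have hbi : ∀ i ∈ range a, (b i : ℝ) = (m : ℝ) - (r i : ℝ) := by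
    intro i hi
    have h' := hclass i hi
    have : ((r i + b i : ℕ) : ℝ) = (m : ℝ) := by rw [h']
    push_cast at this
    linarith
  have hsplit : ∑ x ∈ range a, (r x : ℝ) * (b x : ℝ)
      = (m : ℝ) * (∑ i ∈ range a, (r i : ℝ)) - ∑ i ∈ range a, (r i : ℝ) ^ 2 := by
    rw [Finset.mul_sum, ← Finset.sum_sub_distrib]
    refine Finset.sum_congr rfl (fun i hi => ?_)
    rw [hbi i hi]; ring
  have hBtot : ∑ x ∈ range a, (b x : ℝ) = (a : ℝ) * m - ∑ i ∈ range a, (r i : ℝ) := by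
    rw [Finset.sum_congr rfl hbi, Finset.sum_sub_distrib, Finset.sum_const, card_range]
    push_cast; ring
  rw [hsplit, hBtot]
  have hapos : (0 : ℝ) < a := by positivity
  rw [le_div_iff₀ hapos]
  nlinarith [hcauchy]
end

section
/- For every integer a ≥ 2 there is a constant C = C(a) > 0 such that for every positive integer n the two-interval 2-coloring χ of [1,n] defined by coloring x red if x ≤ ⌊(a+1)n/(a²+2a+2)⌋ and blue otherwise satisfies |M_{χ,a}(n) − n²/(2a(a²+2a+2))| ≤ C·n. -/
open Finset

def auxS (a k : ℕ) : ℕ := ∑ y ∈ Icc 1 k, (k - a * y)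

lemma gaussIcc (q : ℕ) : (∑ y ∈ Icc 1 q, (y:ℤ)) * 2 = q*(q+1) := by
  induction q with
  | zero => simp
  | succ k ih =>
    rw [Finset.sum_Icc_succ_top (by omega)]
    push_cast
    linarith

lemma auxS_key (a k : ℕ) (ha : 1 ≤ a) :
    (k:ℤ)^2 - a*k ≤ 2*a*(auxS a k) ∧ 2*a*((auxS a k):ℤ) ≤ (k:ℤ)^2 := by
  set q := k / a with hq
  set s := k % a with hs
  have h1 : a*q + s = k := Nat.div_add_mod k a
  have h2 : s < a := Nat.mod_lt _ (by omega)
  have hqk : q ≤ k := Nat.div_le_self k a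
  have hS : auxS a k = ∑ y ∈ Icc 1 q, (k - a*y) := by
    unfold auxS
    rw [Finset.sum_subset (Finset.Icc_subset_Icc_right hqk)]
    intro y hy hy2
    simp only [mem_Icc] at hy hy2
    have h3 : a*(q+1) ≤ a*y := Nat.mul_le_mul_left a (by omega)
    have h4 : a*(q+1) = a*q + a := by ring
    omega
  have hcast : ((auxS a k : ℕ):ℤ) = ∑ y ∈ Icc 1 q, ((k:ℤ) - a*y) := by
    rw [hS]
    push_cast
    refine Finset.sum_congr rfl fun y hy => ?_
    simp only [mem_Icc] at hy
    have : a*y ≤ k := le_trans (Nat.mul_le_mul_left a hy.2) (by omega)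
    push_cast [Nat.cast_sub this]
    ring
  have hg := gaussIcc q
  have hSS : 2*((auxS a k):ℤ) = 2*q*k - a*(q*(q+1)) := by
    rw [hcast, Finset.sum_sub_distrib, ← Finset.mul_sum, Finset.sum_const, Nat.card_Icc]
    simp only [Nat.add_sub_cancel, nsmul_eq_mul]
    linear_combination (-(a:ℤ))*hg
  have hk : (a:ℤ)*q + s = k := by exact_mod_cast h1
  have h2' : (s:ℤ) < a := by exact_mod_cast h2
  have hs0 : (0:ℤ) ≤ s := Int.natCast_nonneg s
  have hq0 : (0:ℤ) ≤ q := Int.natCast_nonneg q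
  have hfinal : (k:ℤ)^2 - 2*a*(auxS a k) = a^2*q + s^2 := by
    linear_combination (-(a:ℤ))*hSS - ((k:ℤ) - a*q + s)*hk
  constructor <;> nlinarith [hfinal, hk, mul_le_mul_of_nonneg_left h2'.le hs0]

lemma count_lemma (a n r : ℕ) (ha : 2 ≤ a) (hrn : r ≤ n) (h1 : (a+1)*r ≤ n) :
    monoTriples a n (fun x => decide (x ≤ r)) = auxS a r + auxS a (n - (a+1)*r) := by
  classical
  simp only [monoTriples]
  set m := n - (a+1)*r with hm
  have hfe : ((Icc 1 n ×ˢ Icc 1 n).filter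
      (fun p => p.1 + a*p.2 ≤ n ∧ (decide (p.1 ≤ r)) = (decide (p.2 ≤ r)) ∧
        (decide (p.2 ≤ r)) = (decide (p.1 + a*p.2 ≤ r))))
      = ((Icc 1 n ×ˢ Icc 1 n).filter (fun p => p.1 + a*p.2 ≤ r)) ∪
        ((Icc 1 n ×ˢ Icc 1 n).filter (fun p => r < p.1 ∧ r < p.2 ∧ p.1 + a*p.2 ≤ n)) := by
    rw [← Finset.filter_or]
    apply Finset.filter_congr
    intro p hp
    obtain ⟨x, y⟩ := p
    simp only [Finset.mem_product, mem_Icc] at hp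
    have hy : y ≤ a*y := Nat.le_mul_of_pos_left _ (by omega)
    simp only [decide_eq_decide]
    omega
  rw [hfe, Finset.card_union_of_disjoint]
  · congr 1
    · -- red count
      rw [Finset.card_filter, Finset.sum_product_right]
      have step : ∀ y ∈ Icc 1 n,
          (∑ x ∈ Icc 1 n, if ((x, y) : ℕ × ℕ).1 + a*((x,y) : ℕ × ℕ).2 ≤ r then 1 else 0)
          = r - a*y := by
        intro y hy
        rw [← Finset.card_filter]
        have hfx : (Icc 1 n).filter (fun x => x + a*y ≤ r) = Icc 1 (r - a*y) := by
          ext x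
          simp only [mem_filter, mem_Icc]
          omega
        rw [hfx, Nat.card_Icc]
        omega
      rw [Finset.sum_congr rfl step]
      unfold auxS
      refine (Finset.sum_subset (Finset.Icc_subset_Icc_right hrn) ?_).symm
      intro y hy hy2
      simp only [mem_Icc] at hy hy2
      have : y ≤ a*y := Nat.le_mul_of_pos_left _ (by omega)
      omega
    · -- blue count
      rw [Finset.card_filter, Finset.sum_product_right]
      have step : ∀ y ∈ Icc 1 n,
          (∑ x ∈ Icc 1 n, if r < ((x, y) : ℕ × ℕ).1 ∧ r < ((x,y) : ℕ × ℕ).2 ∧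
            ((x, y) : ℕ × ℕ).1 + a*((x,y) : ℕ × ℕ).2 ≤ n then 1 else 0)
          = if r < y then (n - a*y) - r else 0 := by
        intro y hy
        rw [← Finset.card_filter]
        by_cases hry : r < y
        · have hfx : (Icc 1 n).filter (fun x => r < x ∧ r < y ∧ x + a*y ≤ n)
              = Icc (r+1) (n - a*y) := by
            ext x
            simp only [mem_filter, mem_Icc]
            omega
          rw [hfx, Nat.card_Icc, if_pos hry]
          omega
        · have hfx : (Icc 1 n).filter (fun x => r < x ∧ r < y ∧ x + a*y ≤ n) = ∅ := by
            ext x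
            simp only [mem_filter, mem_Icc, Finset.notMem_empty, iff_false]
            omega
          rw [hfx, if_neg hry]
          simp
      rw [Finset.sum_congr rfl step, ← Finset.sum_filter]
      have hf2 : (Icc 1 n).filter (fun y => r < y) = Icc (r+1) n := by
        ext y
        simp only [mem_filter, mem_Icc]
        omega
      rw [hf2]
      have hmap : (Icc (r+1) n) = Finset.map (addRightEmbedding r) (Icc 1 (n - r)) := by
        rw [Finset.map_add_right_Icc]
        congr 1 <;> omega
      rw [hmap, Finset.sum_map]
      have step2 : ∀ y ∈ Icc 1 (n - r),
          (n - a*(addRightEmbedding r y)) - r = m - a*y := by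
        intro y hy
        simp only [addRightEmbedding_apply]
        have e1 : a*(y+r) = a*y + a*r := by ring
        have e2 : (a+1)*r = a*r + r := by ring
        omega
      rw [Finset.sum_congr rfl step2]
      unfold auxS
      have hmn : m ≤ n - r := by
        have : r ≤ (a+1)*r := Nat.le_mul_of_pos_left _ (by omega)
        omega
      refine (Finset.sum_subset (Finset.Icc_subset_Icc_right hmn) ?_).symm
      intro y hy hy2
      simp only [mem_Icc] at hy hy2
      have : y ≤ a*y := Nat.le_mul_of_pos_left _ (by omega)
      omega
  · rw [Finset.disjoint_filter]
    intro p hp h2 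
    obtain ⟨x, y⟩ := p
    simp only [Finset.mem_product, mem_Icc] at hp
    have hy : y ≤ a*y := Nat.le_mul_of_pos_left _ (by omega)
    omega


/-- The two-interval coloring (red up to `⌊(a+1)n/(a²+2a+2)⌋`, blue afterwards)
has `n² / (2a(a² + 2a + 2)) + O(n)` monochromatic `(x, y, x + a*y)` triples. -/
theorem two_interval_coloring_monoTriples (a : ℕ) (ha : 2 ≤ a) :
    ∃ C : ℝ, 0 < C ∧ ∀ n : ℕ, 0 < n →
      |(monoTriples a n
          (fun x => decide (x ≤ (a + 1) * n / (a ^ 2 + 2 * a + 2))) : ℝ)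
        - (n : ℝ) ^ 2 / (2 * a * ((a : ℝ) ^ 2 + 2 * a + 2))| ≤ C * n := by
  set t := a ^ 2 + 2 * a + 2 with ht
  have ht0 : 0 < t := by positivity
  refine ⟨(t:ℝ)^2 + 2*a*t, by positivity, ?_⟩
  intro n hn
  set r := (a + 1) * n / t with hrdef
  -- basic numeric facts
  have hdm : t * r + (a+1) * n % t = (a+1) * n := Nat.div_add_mod _ _
  have hmod : (a+1) * n % t < t := Nat.mod_lt _ ht0
  have hr1 : t * r ≤ (a+1) * n := by omega
  have h1 : (a+1) * r < n := by
    have key : t * ((a+1) * r) < t * n := by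
      calc t * ((a+1) * r) = (a+1) * (t * r) := by ring
        _ ≤ (a+1) * ((a+1) * n) := Nat.mul_le_mul_left _ hr1
        _ = (a^2 + 2*a + 1) * n := by ring
        _ < t * n := (Nat.mul_lt_mul_right hn).mpr (by omega)
    exact lt_of_mul_lt_mul_left key (Nat.zero_le t)
  have hrn : r ≤ n := by
    have : r ≤ (a+1) * r := Nat.le_mul_of_pos_left _ (by omega)
    omega
  set m := n - (a+1) * r with hm
  set δ := (a+1) * n - t * r with hδ
  have hδ1 : t * r + δ = (a+1) * n := by omega
  have hδ2 : δ < t := by omega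
  have hmn : m ≤ n := by omega
  -- counting
  have hcount : monoTriples a n (fun x => decide (x ≤ r)) = auxS a r + auxS a m :=
    count_lemma a n r ha hrn h1.le
  -- integer estimates
  obtain ⟨hkr1, hkr2⟩ := auxS_key a r (by omega)
  obtain ⟨hkm1, hkm2⟩ := auxS_key a m (by omega)
  have hmz : ((m:ℕ):ℤ) = (n:ℤ) - ((a:ℤ)+1) * r := by
    rw [hm]
    push_cast [Nat.cast_sub h1.le]
    ring
  have hδz : ((δ:ℕ):ℤ) = ((a:ℤ)+1) * n - (t:ℤ) * r := by
    rw [hδ]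
    push_cast [Nat.cast_sub hr1]
    ring
  have htz : ((t:ℕ):ℤ) = ((a:ℤ)+1)^2 + 1 := by
    rw [ht]; push_cast; ring
  have hid : (t:ℤ) * ((r:ℤ)^2 + (m:ℤ)^2) = (n:ℤ)^2 + (δ:ℤ)^2 := by
    rw [hmz, hδz, htz]; ring
  set X := auxS a r + auxS a m with hX
  clear_value X
  clear_value t r m δ
  have htz0 : (0:ℤ) ≤ (t:ℤ) := Int.natCast_nonneg t
  have e1 : (t:ℤ) * (2*a*(auxS a r)) ≤ (t:ℤ) * (r:ℤ)^2 := mul_le_mul_of_nonneg_left hkr2 htz0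
  have e2 : (t:ℤ) * ((r:ℤ)^2 - a*r) ≤ (t:ℤ) * (2*a*(auxS a r)) := mul_le_mul_of_nonneg_left hkr1 htz0
  have e3 : (t:ℤ) * (2*a*(auxS a m)) ≤ (t:ℤ) * (m:ℤ)^2 := mul_le_mul_of_nonneg_left hkm2 htz0
  have e4 : (t:ℤ) * ((m:ℤ)^2 - a*m) ≤ (t:ℤ) * (2*a*(auxS a m)) := mul_le_mul_of_nonneg_left hkm1 htz0
  have hδ0 : (0:ℤ) ≤ (δ:ℤ) := Int.natCast_nonneg δ
  have hδt : (δ:ℤ) ≤ (t:ℤ) := by exact_mod_cast hδ2.le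
  have hδsq : (δ:ℤ)^2 ≤ (t:ℤ)^2 := pow_le_pow_left₀ hδ0 hδt 2
  have hrn' : (r:ℤ) ≤ (n:ℤ) := by exact_mod_cast hrn
  have hmn' : (m:ℤ) ≤ (n:ℤ) := by exact_mod_cast hmn
  have ha0 : (0:ℤ) ≤ (a:ℤ) := Int.natCast_nonneg a
  have hta0 : (0:ℤ) ≤ (t:ℤ) * (a:ℤ) := by positivity
  have htar : (t:ℤ) * a * r ≤ (t:ℤ) * a * n := by
    exact mul_le_mul_of_nonneg_left hrn' hta0
  have htam : (t:ℤ) * a * m ≤ (t:ℤ) * a * n := by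
    exact mul_le_mul_of_nonneg_left hmn' hta0
  have hXz : (X:ℤ) = (auxS a r : ℤ) + (auxS a m : ℤ) := by push_cast [hX]; ring
  have p1 : (t:ℤ)*(2*a*(auxS a r)) + (t:ℤ)*(2*a*(auxS a m)) = 2*a*t*(X:ℤ) := by
    rw [hXz]; ring
  have hid' : (t:ℤ)*(r:ℤ)^2 + (t:ℤ)*(m:ℤ)^2 = (n:ℤ)^2 + (δ:ℤ)^2 := by linarith [hid]
  have hbound : |2*(a:ℤ)*t*(X:ℤ) - (n:ℤ)^2| ≤ (t:ℤ)^2 + 2*a*t*n := by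
    rw [abs_le]
    constructor
    · linarith [e2, e4, hid', p1, htar, htam, sq_nonneg ((δ:ℤ))]
    · linarith [e1, e3, hid', p1, hδsq]
  -- pass to ℝ
  have h2at : (0:ℝ) < 2*(a:ℝ)*(t:ℝ) := by positivity
  have habsR : |2*(a:ℝ)*t*(X:ℝ) - (n:ℝ)^2| ≤ (t:ℝ)^2 + 2*a*t*n := by
    exact_mod_cast hbound
  have htR : ((t:ℕ):ℝ) = (a:ℝ)^2 + 2*a + 2 := by rw [ht]; push_cast; ring
  rw [hcount, ← htR]
  have hrewrite : (X:ℝ) - (n:ℝ)^2 / (2*a*(t:ℝ)) = (2*(a:ℝ)*t*(X:ℝ) - (n:ℝ)^2) / (2*a*(t:ℝ)) := by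
    field_simp
  rw [hrewrite, abs_div, abs_of_pos h2at, div_le_iff₀ h2at]
  have hn1 : (1:ℝ) ≤ (n:ℝ) := by exact_mod_cast hn
  have ht1 : (1:ℝ) ≤ (t:ℝ) := by exact_mod_cast ht0
  have ha1 : (1:ℝ) ≤ (a:ℝ) := by exact_mod_cast (by omega : 1 ≤ a)
  have hq2 : (1:ℝ) ≤ 2*(a:ℝ)*t := by
    have h := mul_le_mul (by linarith : (1:ℝ) ≤ 2*(a:ℝ)) ht1 one_pos.le (by linarith : (0:ℝ) ≤ 2*(a:ℝ))
    linarith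
  have hq1 : (1:ℝ) ≤ 2*(a:ℝ)*t*n := by
    have h := mul_le_mul hq2 hn1 one_pos.le (by linarith : (0:ℝ) ≤ 2*(a:ℝ)*t)
    linarith
  have c1 : (t:ℝ)^2 * 1 ≤ (t:ℝ)^2 * (2*a*t*n) :=
    mul_le_mul_of_nonneg_left hq1 (by positivity)
  have c2 : 1*(2*(a:ℝ)*t*n) ≤ (2*a*t)*(2*a*t*n) :=
    mul_le_mul_of_nonneg_right hq2 (by positivity)
  linarith [habsR, c1, c2]
end

section
/- There is a constant C > 0 such that for every positive integer n the 2-coloring χ of [1,n] defined by coloring x red if x ≤ ⌊4n/11⌋ or x > ⌊10n/11⌋, and blue if ⌊4n/11⌋ < x ≤ ⌊10n/11⌋, satisfies |S(χ,n) − n²/22| ≤ C·n, where S(χ,n) is the number of monochromatic Schur triples. In particular, the minimum over all 2-colorings of [1,n] of the number of monochromatic Schur triples is at most n²/22 + C·n. -/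
open Finset

/-- The number of monochromatic Schur triples of a coloring `χ` of `[1, n]`:
pairs `(x, y)` with `1 ≤ x ≤ y`, `x + y ≤ n`, and `χ x = χ y = χ (x + y)`. -/
def schurTriples {α : Type*} [DecidableEq α] (n : ℕ) (χ : ℕ → α) : ℕ :=
  ((Finset.Icc 1 n ×ˢ Finset.Icc 1 n).filter
    (fun p => p.1 ≤ p.2 ∧ p.1 + p.2 ≤ n ∧
      χ p.1 = χ p.2 ∧ χ p.2 = χ (p.1 + p.2))).card

lemma schur_sum {α : Type*} [DecidableEq α] (n : ℕ) (χ : ℕ → α) :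
    schurTriples n χ = ∑ x ∈ Icc 1 n,
      ((Icc 1 n).filter (fun y => x ≤ y ∧ x + y ≤ n ∧
        χ x = χ y ∧ χ y = χ (x + y))).card := by
  rw [schurTriples]
  rw [Finset.card_eq_sum_card_fiberwise (f := Prod.fst) (t := Icc 1 n)
    (fun p hp => (mem_product.1 (mem_filter.1 hp).1).1)]
  refine Finset.sum_congr rfl fun x hx => ?_
  refine Finset.card_bij (fun p _ => p.2) ?_ ?_ ?_
  · rintro ⟨x', y⟩ hp
    simp only [mem_filter, mem_product] at hp ⊢
    obtain ⟨⟨⟨hx', hy⟩, h⟩, rfl⟩ := hp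
    exact ⟨hy, h⟩
  · rintro ⟨x1, y1⟩ h1 ⟨x2, y2⟩ h2 h
    simp only [mem_filter] at h1 h2
    simp_all [Prod.ext_iff]
  · intro y hy
    simp only [mem_filter, mem_product] at hy ⊢
    exact ⟨(x, y), ⟨⟨⟨hx, hy.1⟩, hy.2⟩, rfl⟩, rfl⟩



lemma icc_range (f : ℕ → ℕ) (m : ℕ) :
    ∑ x ∈ Icc 1 m, f x = ∑ i ∈ range m, f (1 + i) := by
  rw [← Finset.Ico_add_one_right_eq_Icc, Finset.sum_Ico_eq_sum_range]
  simp

/-- triangle count -/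
lemma tri_s12 (m : ℕ) : ∑ x ∈ Icc 1 m, (m + 1 - 2*x) = m^2/4 := by
  have key : ∀ m : ℕ, ∑ i ∈ range m, (m + 1 - 2*(i+1)) = m^2/4 := by
    intro m
    induction m using Nat.twoStepInduction with
    | zero => simp
    | one => simp
    | more m ih _ =>
      rw [Finset.sum_range_succ', Finset.sum_range_succ]
      have h1 : ∀ i ∈ range m, m + 2 + 1 - 2*(i+1+1) = m + 1 - 2*(i+1) := by
        intro i _; omega
      rw [Finset.sum_congr rfl h1, ih]
      have h3 : (m+2)^2 = m^2 + 4*(m+1) := by ring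
      have h4 : m^2 + 4*(m+1) ≥ m^2 := by omega
      rw [h3]
      omega
  rw [icc_range, ← key m]
  exact Finset.sum_congr rfl fun i _ => by omega

/-- partial linear sum -/
lemma linsum : ∀ (a b : ℕ), 2*a ≤ b → ∑ x ∈ Icc 1 a, (b + 1 - 2*x) = a*b - a*a := by
  intro a
  induction a with
  | zero => simp
  | succ a ih =>
    intro b hb
    rw [Finset.sum_Icc_succ_top (by omega), ih b (by omega)]
    have h1 : a*a ≤ a*b := Nat.mul_le_mul_left a (by omega)
    have h2 : (a+1)*(a+1) ≤ (a+1)*b := Nat.mul_le_mul_left (a+1) (by omega)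
    zify [h1, h2, show 2*(a+1) ≤ b + 1 by omega]
    ring

/-- descending sum -/
lemma descsum (m k : ℕ) (h : k ≤ m + 1) : ∑ x ∈ Icc 1 m, (k - x) = k*(k-1)/2 := by
  rcases Nat.eq_zero_or_pos k with rfl | hk
  · simp
  have hsub : Finset.Icc 1 (k-1) ⊆ Finset.Icc 1 m := Finset.Icc_subset_Icc_right (by omega)
  rw [← Finset.sum_subset hsub (fun x hx hx' => by
    simp only [mem_Icc] at hx hx'; omega)]
  rw [icc_range]
  have h1 : ∀ i ∈ range (k-1), k - (1+i) = (k-1) - i := fun i _ => by omega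
  rw [Finset.sum_congr rfl h1]
  have hr := Finset.sum_range_reflect (fun j => j) (k-1)
  have h3 : ∑ i ∈ range (k-1), ((k-1) - i) = ∑ i ∈ range (k-1), (i+1) := by
    have := Finset.sum_range_reflect (fun j => j + 1) (k-1)
    rw [← this]
    exact Finset.sum_congr rfl fun i hi => by
      simp only [mem_range] at hi; omega
  rw [h3, Finset.sum_add_distrib, Finset.sum_range_id, Finset.sum_const,
    Finset.card_range, smul_eq_mul, mul_one]
  have hev : Even ((k-1) * (k-1-1)) := Nat.even_mul_pred_self _
  have hev2 : Even (k * (k-1)) := Nat.even_mul_pred_self _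
  have e1 : k * (k-1) = (k-1)*(k-1-1) + 2*(k-1) := by
    rcases k with _ | p
    · omega
    rcases p with _ | q
    · simp
    · simp only [Nat.add_sub_cancel]
      ring
  omega

lemma schur_formula (n : ℕ) :
    schurTriples n (fun x => decide (x ≤ 4 * n / 11 ∨ 10 * n / 11 < x))
      + ((4*n/11) * (10*n/11) - (4*n/11) * (4*n/11))
    = (4*n/11)^2/4 + (10*n/11)^2/4 + (n - 10*n/11)*(n - 10*n/11 - 1)/2 := by
  set a := 4*n/11 with ha
  set b := 10*n/11 with hb
  have hd1 : 11*a ≤ 4*n ∧ 4*n < 11*a + 11 := by omega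
  have hd2 : 11*b ≤ 10*n ∧ 10*n < 11*b + 11 := by omega
  rw [schur_sum]
  have hsplit : ∑ x ∈ Icc 1 n,
      ((Icc 1 n).filter (fun y => x ≤ y ∧ x + y ≤ n ∧
        (fun x => decide (x ≤ a ∨ b < x)) x = (fun x => decide (x ≤ a ∨ b < x)) y ∧
        (fun x => decide (x ≤ a ∨ b < x)) y = (fun x => decide (x ≤ a ∨ b < x)) (x+y))).card
      = (∑ x ∈ Icc 1 a, ((a + 1 - 2*x) + ((n-b) - x)))
        + ∑ x ∈ Icc (a+1) b, (b + 1 - 2*x) := by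
    have hIcc : Icc 1 n = Icc 1 a ∪ Icc (a+1) b ∪ Icc (b+1) n := by
      ext z; simp only [mem_Icc, mem_union]; omega
    nth_rewrite 1 [hIcc]
    rw [Finset.sum_union, Finset.sum_union]
    · have p3 : ∑ x ∈ Icc (b+1) n, ((Icc 1 n).filter (fun y => x ≤ y ∧ x + y ≤ n ∧
          (fun x => decide (x ≤ a ∨ b < x)) x = (fun x => decide (x ≤ a ∨ b < x)) y ∧
          (fun x => decide (x ≤ a ∨ b < x)) y = (fun x => decide (x ≤ a ∨ b < x)) (x+y))).card = 0 := by
        refine Finset.sum_eq_zero fun x hx => ?_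
        simp only [mem_Icc] at hx
        rw [Finset.card_eq_zero, Finset.filter_eq_empty_iff]
        intro y hy
        simp only [mem_Icc] at hy
        simp only [decide_eq_decide]
        omega
      have p1 : ∀ x ∈ Icc 1 a, ((Icc 1 n).filter (fun y => x ≤ y ∧ x + y ≤ n ∧
          (fun x => decide (x ≤ a ∨ b < x)) x = (fun x => decide (x ≤ a ∨ b < x)) y ∧
          (fun x => decide (x ≤ a ∨ b < x)) y = (fun x => decide (x ≤ a ∨ b < x)) (x+y))).card
          = (a + 1 - 2*x) + ((n-b) - x) := by
        intro x hx
        simp only [mem_Icc] at hx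
        have hset : ((Icc 1 n).filter (fun y => x ≤ y ∧ x + y ≤ n ∧
          (fun x => decide (x ≤ a ∨ b < x)) x = (fun x => decide (x ≤ a ∨ b < x)) y ∧
          (fun x => decide (x ≤ a ∨ b < x)) y = (fun x => decide (x ≤ a ∨ b < x)) (x+y)))
            = Icc x (a-x) ∪ Icc (b+1) (n-x) := by
          ext y
          simp only [mem_filter, mem_Icc, mem_union, decide_eq_decide]
          omega
        rw [hset, Finset.card_union_of_disjoint, Nat.card_Icc, Nat.card_Icc]
        · omega
        · rw [Finset.disjoint_left]
          intro z hz1 hz2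
          simp only [mem_Icc] at hz1 hz2
          omega
      have p2 : ∀ x ∈ Icc (a+1) b, ((Icc 1 n).filter (fun y => x ≤ y ∧ x + y ≤ n ∧
          (fun x => decide (x ≤ a ∨ b < x)) x = (fun x => decide (x ≤ a ∨ b < x)) y ∧
          (fun x => decide (x ≤ a ∨ b < x)) y = (fun x => decide (x ≤ a ∨ b < x)) (x+y))).card
          = (b + 1 - 2*x) := by
        intro x hx
        simp only [mem_Icc] at hx
        have hset : ((Icc 1 n).filter (fun y => x ≤ y ∧ x + y ≤ n ∧
          (fun x => decide (x ≤ a ∨ b < x)) x = (fun x => decide (x ≤ a ∨ b < x)) y ∧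
          (fun x => decide (x ≤ a ∨ b < x)) y = (fun x => decide (x ≤ a ∨ b < x)) (x+y)))
            = Icc x (b-x) := by
          ext y
          simp only [mem_filter, mem_Icc, decide_eq_decide]
          omega
        rw [hset, Nat.card_Icc]
        omega
      rw [Finset.sum_congr rfl p1, Finset.sum_congr rfl p2, p3, Nat.add_zero]
    · rw [Finset.disjoint_left]; intro z h1 h2
      simp only [mem_Icc] at h1 h2; omega
    · rw [Finset.disjoint_left]; intro z h1 h2
      simp only [mem_Icc, mem_union] at h1 h2; omega
  rw [hsplit]
  rw [Finset.sum_add_distrib, tri_s12 a, descsum a (n - b) (by omega)]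
  have hbsum : ∑ x ∈ Icc 1 a, (b + 1 - 2*x) + ∑ x ∈ Icc (a+1) b, (b + 1 - 2*x)
      = b^2/4 := by
    rw [← tri_s12 b]
    have : Icc 1 b = Icc 1 a ∪ Icc (a+1) b := by
      ext z; simp only [mem_Icc, mem_union]; omega
    rw [this, Finset.sum_union]
    rw [Finset.disjoint_left]; intro z h1 h2
    simp only [mem_Icc] at h1 h2; omega
  rw [linsum a b (by omega)] at hbsum
  omega



lemma sq_le_100 {u : ℤ} (h0 : 0 ≤ u) (h1 : u ≤ 10) : u^2 ≤ 100 := by nlinarith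
lemma mul_le_100 {u v : ℤ} (h0 : 0 ≤ u) (h1 : u ≤ 10) (h2 : 0 ≤ v) (h3 : v ≤ 10) :
    u*v ≤ 100 := by nlinarith


/-- main -/
theorem schur_two_colorings :
    ∃ C : ℝ, 0 < C ∧ ∀ n : ℕ, 0 < n →
      |(schurTriples n
          (fun x => decide (x ≤ 4 * n / 11 ∨ 10 * n / 11 < x)) : ℝ)
        - (n : ℝ) ^ 2 / 22| ≤ C * n ∧
      ((sInf {m : ℕ | ∃ χ : ℕ → Bool, schurTriples n χ = m} : ℕ) : ℝ) ≤
        (n : ℝ) ^ 2 / 22 + C * n := by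
  refine ⟨5, by norm_num, fun n hn => ?_⟩
  have hmain : |(schurTriples n
      (fun x => decide (x ≤ 4 * n / 11 ∨ 10 * n / 11 < x)) : ℝ)
      - (n : ℝ) ^ 2 / 22| ≤ 5 * (n:ℝ) := by
    set S := schurTriples n (fun x => decide (x ≤ 4 * n / 11 ∨ 10 * n / 11 < x)) with hS
    set a := 4*n/11 with ha
    set b := 10*n/11 with hb
    have hab : a ≤ b := by omega
    have hbn : b < n := by omega
    have h11a : 4*n - 10 ≤ 11*a ∧ 11*a ≤ 4*n := by omega
    have h11b : 10*n - 10 ≤ 11*b ∧ 11*b ≤ 10*n := by omega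
    have key := schur_formula n
    rw [← ha, ← hb, ← hS] at key
    set A2 := a^2/4 with hA2
    set B2 := b^2/4 with hB2
    set E := (n-b)*(n-b-1)/2 with hE
    -- integer versions
    have haa : a*a ≤ a*b := Nat.mul_le_mul_left a hab
    have hkeyZ : (S:ℤ) + a*b - a*a = A2 + B2 + E := by
      have := congrArg (fun t : ℕ => (t:ℤ)) key
      push_cast [haa] at this
      linarith
    have h1 : 4*(A2:ℤ) + (a:ℤ)^2 % 4 = (a:ℤ)^2 := by
      push_cast [hA2]
      omega
    have h2 : 4*(B2:ℤ) + (b:ℤ)^2 % 4 = (b:ℤ)^2 := by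
      push_cast [hB2]
      omega
    have h3 : 2*(E:ℤ) = ((n:ℤ)-b)*((n:ℤ)-b-1) := by
      have hev : 2 ∣ (n-b)*(n-b-1) := (Nat.even_mul_pred_self (n-b)).two_dvd
      have : 2*E = (n-b)*(n-b-1) := by
        rw [hE, Nat.mul_div_cancel' hev]
      have := congrArg (fun t : ℕ => (t:ℤ)) this
      push_cast [Nat.le_of_lt hbn, show 1 ≤ n - b by omega] at this
      linarith
    set r := (a:ℤ)^2 % 4 with hr
    set s := (b:ℤ)^2 % 4 with hs
    have hrb : 0 ≤ r ∧ r < 4 := ⟨Int.emod_nonneg _ (by norm_num), Int.emod_lt_of_pos _ (by norm_num)⟩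
    have hsb : 0 ≤ s ∧ s < 4 := ⟨Int.emod_nonneg _ (by norm_num), Int.emod_lt_of_pos _ (by norm_num)⟩
    have hid : 5324*(S:ℤ) - 242*(n:ℤ)^2
        = 55*(4*(n:ℤ) - 11*a)^2 + 33*(10*(n:ℤ) - 11*b)^2
          - 44*((4*(n:ℤ)-11*a)*(10*(n:ℤ)-11*b)) - 242*(10*(n:ℤ)-11*b)
          - 242*(n:ℤ) - 1331*(r+s) := by
      linear_combination 5324*hkeyZ + 1331*h1 + 1331*h2 + 2662*h3
    set U := 4*(n:ℤ) - 11*a with hU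
    set V := 10*(n:ℤ) - 11*b with hV
    have hUb : 0 ≤ U ∧ U ≤ 10 := by
      rw [hU]; constructor <;> omega
    have hVb : 0 ≤ V ∧ V ≤ 10 := by
      rw [hV]; constructor <;> omega
    clear_value S A2 B2 E U V
    clear key hkeyZ h1 h2 h3 hU hV hA2 hB2 hE haa hab hbn h11a h11b ha hb hS hr hs
    have hU2 : U^2 ≤ 100 := sq_le_100 hUb.1 hUb.2
    have hV2 : V^2 ≤ 100 := sq_le_100 hVb.1 hVb.2
    have hUV : 0 ≤ U*V := mul_nonneg hUb.1 hVb.1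
    have hUV' : U*V ≤ 100 := mul_le_100 hUb.1 hUb.2 hVb.1 hVb.2
    have hnZ : 1 ≤ (n:ℤ) := by exact_mod_cast hn
    have hup : 5324*(S:ℤ) - 242*(n:ℤ)^2 ≤ 26620*(n:ℤ) := by
      rw [hid]; linarith [hrb.1, hsb.1, hVb.1]
    have hlo : -(26620*(n:ℤ)) ≤ 5324*(S:ℤ) - 242*(n:ℤ)^2 := by
      rw [hid]; linarith [hrb.2, hsb.2, hVb.2, sq_nonneg U, sq_nonneg V]
    have hupR : 5324*(S:ℝ) - 242*(n:ℝ)^2 ≤ 26620*(n:ℝ) := by exact_mod_cast hup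
    have hloR : -(26620*(n:ℝ)) ≤ 5324*(S:ℝ) - 242*(n:ℝ)^2 := by exact_mod_cast hlo
    rw [abs_le]
    constructor <;> linarith
  refine ⟨hmain, ?_⟩
  have hInf : sInf {m : ℕ | ∃ χ : ℕ → Bool, schurTriples n χ = m}
      ≤ schurTriples n (fun x => decide (x ≤ 4 * n / 11 ∨ 10 * n / 11 < x)) :=
    Nat.sInf_le ⟨_, rfl⟩
  have h2 := (abs_le.1 hmain).2
  calc ((sInf {m : ℕ | ∃ χ : ℕ → Bool, schurTriples n χ = m} : ℕ) : ℝ)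
      ≤ (schurTriples n (fun x => decide (x ≤ 4 * n / 11 ∨ 10 * n / 11 < x)) : ℝ) := by
        exact_mod_cast hInf
    _ ≤ (n : ℝ) ^ 2 / 22 + 5 * (n:ℝ) := by linarith
end

section
/- There is a constant C > 0 such that for every positive integer n there exists a 3-coloring χ of [1,n] with S(χ,n) ≤ 47n²/6238 + C·n; such a coloring is obtained by partitioning [1,n] into seven consecutive intervals with endpoints ⌊440n/3119⌋, ⌊1100n/3119⌋, ⌊1210n/3119⌋, ⌊2530n/3119⌋, ⌊2585n/3119⌋, ⌊3072n/3119⌋, n (i.e., interval lengths proportional to 1, 3/2, 1/4, 3, 1/8, 487/440, 47/440) and assigning them the colors 1, 2, 1, 3, 1, 2, 1 in order. -/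
private def triSet (n A B L : ℕ) : Finset (ℕ × ℕ) :=
  (Finset.Icc 1 n ×ˢ Finset.Icc 1 n).filter
    (fun p => A < p.1 ∧ B < p.2 ∧ p.1 + p.2 ≤ L)

open Finset in
private lemma tri_count (n A B L : ℕ) :
    2 * (triSet n A B L).card ≤ (L - A - B) * (L - A - B) := by
  have hsub : triSet n A B L ⊆
      (Finset.Icc (A+1) (A + (L - A - B))).biUnion
        (fun x => {x} ×ˢ Finset.Icc (B+1) (L - x)) := by
    intro p hp
    simp only [triSet, mem_filter, mem_product, mem_Icc] at hp
    simp only [mem_biUnion, mem_Icc, mem_product, mem_singleton]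
    exact ⟨p.1, by omega, by omega⟩
  have h1 := Finset.card_le_card hsub
  have h2 := Finset.card_biUnion_le (s := Finset.Icc (A+1) (A + (L - A - B)))
      (t := fun x => {x} ×ˢ Finset.Icc (B+1) (L - x))
  have h3 : ∑ x ∈ Finset.Icc (A+1) (A + (L - A - B)),
      ({x} ×ˢ Finset.Icc (B+1) (L - x)).card
      = ∑ i ∈ Finset.range (L - A - B), (L - A - B - 1 - i) := by
    rw [← Finset.Ico_add_one_right_eq_Icc, Finset.sum_Ico_eq_sum_range]
    have hr : A + (L - A - B) + 1 - (A + 1) = L - A - B := by omega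
    rw [hr]
    refine Finset.sum_congr rfl (fun i hi => ?_)
    simp only [Finset.mem_range] at hi
    simp only [Finset.card_product, Finset.card_singleton, Nat.card_Icc, one_mul]
    omega
  have h4 : ∑ i ∈ Finset.range (L - A - B), (L - A - B - 1 - i)
      = ∑ i ∈ Finset.range (L - A - B), i :=
    Finset.sum_range_reflect (fun i => i) (L - A - B)
  have h5 := Finset.sum_range_id_mul_two (L - A - B)
  have h6 : (L - A - B) * (L - A - B - 1) ≤ (L - A - B) * (L - A - B) :=
    Nat.mul_le_mul_left _ (Nat.sub_le _ _)
  calc 2 * (triSet n A B L).card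
      ≤ 2 * ((Finset.Icc (A+1) (A + (L - A - B))).biUnion
        (fun x => {x} ×ˢ Finset.Icc (B+1) (L - x))).card := Nat.mul_le_mul_left 2 h1
    _ ≤ 2 * ∑ x ∈ Finset.Icc (A+1) (A + (L - A - B)),
        ({x} ×ˢ Finset.Icc (B+1) (L - x)).card := Nat.mul_le_mul_left 2 h2
    _ = (∑ i ∈ Finset.range (L - A - B), i) * 2 := by rw [h3, h4]; ring
    _ = (L - A - B) * (L - A - B - 1) := h5
    _ ≤ (L - A - B) * (L - A - B) := h6

private lemma sq_bound (m c n e : ℕ) (h : 3119 * m ≤ c * n + e) :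
    ((m : ℝ))^2 * 3119^2 ≤ ((c : ℝ) * n + e)^2 := by
  have h' : (3119 : ℝ) * m ≤ (c : ℝ) * n + e := by exact_mod_cast h
  have h0 : (0 : ℝ) ≤ 3119 * m := by positivity
  have := pow_le_pow_left₀ h0 h' 2
  calc ((m : ℝ))^2 * 3119^2 = (3119 * (m : ℝ))^2 := by ring
    _ ≤ ((c : ℝ) * n + e)^2 := this

private lemma case0 (n x y : ℕ) (hn : 3119*3119 ≤ n) (hx : 1 ≤ x) (hy : 1 ≤ y)
    (hs : x + y ≤ n)
    (hrx : x ≤ 440*n/3119 ∨ (1100*n/3119 < x ∧ x ≤ 1210*n/3119) ∨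
        (2530*n/3119 < x ∧ x ≤ 2585*n/3119) ∨ 3072*n/3119 < x)
    (hry : y ≤ 440*n/3119 ∨ (1100*n/3119 < y ∧ y ≤ 1210*n/3119) ∨
        (2530*n/3119 < y ∧ y ≤ 2585*n/3119) ∨ 3072*n/3119 < y)
    (hrz : x+y ≤ 440*n/3119 ∨ (1100*n/3119 < x+y ∧ x+y ≤ 1210*n/3119) ∨
        (2530*n/3119 < x+y ∧ x+y ≤ 2585*n/3119) ∨ 3072*n/3119 < x+y) :
    (0 < x ∧ 0 < y ∧ x + y ≤ 440*n/3119) ∨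
    (0 < x ∧ 1100*n/3119 < y ∧ x + y ≤ 1210*n/3119) ∨
    (1100*n/3119 < x ∧ 0 < y ∧ x + y ≤ 1210*n/3119) ∨
    (0 < x ∧ 2530*n/3119 < y ∧ x + y ≤ 2585*n/3119) ∨
    (2530*n/3119 < x ∧ 0 < y ∧ x + y ≤ 2585*n/3119) ∨
    (0 < x ∧ 3072*n/3119 < y ∧ x + y ≤ n) ∨
    (3072*n/3119 < x ∧ 0 < y ∧ x + y ≤ n) ∨
    (440*n/3119 < x ∧ 440*n/3119 < y ∧ x + y ≤ 1100*n/3119) ∨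
    (440*n/3119 < x ∧ 2585*n/3119 < y ∧ x + y ≤ 3072*n/3119) ∨
    (2585*n/3119 < x ∧ 440*n/3119 < y ∧ x + y ≤ 3072*n/3119) ∨
    (1210*n/3119 < x ∧ 1210*n/3119 < y ∧ x + y ≤ 2530*n/3119) := by
  rcases hrx with hx1 | ⟨hx1, hx2⟩ | ⟨hx1, hx2⟩ | hx1 <;>
  rcases hry with hy1 | ⟨hy1, hy2⟩ | ⟨hy1, hy2⟩ | hy1 <;>
  rcases hrz with hz1 | ⟨hz1, hz2⟩ | ⟨hz1, hz2⟩ | hz1 <;>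
    first
    | (exfalso; omega)
    | exact Or.inl (by omega)
    | exact Or.inr (Or.inl (by omega))
    | exact Or.inr (Or.inr (Or.inl (by omega)))
    | exact Or.inr (Or.inr (Or.inr (Or.inl (by omega))))
    | exact Or.inr (Or.inr (Or.inr (Or.inr (Or.inl (by omega)))))
    | exact Or.inr (Or.inr (Or.inr (Or.inr (Or.inr (Or.inl (by omega))))))
    | exact Or.inr (Or.inr (Or.inr (Or.inr (Or.inr (Or.inr (Or.inl (by omega)))))))

private lemma case1 (n x y : ℕ) (hn : 3119*3119 ≤ n) (hx : 1 ≤ x) (hy : 1 ≤ y)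
    (hs : x + y ≤ n)
    (hrx : (440*n/3119 < x ∧ x ≤ 1100*n/3119) ∨ (2585*n/3119 < x ∧ x ≤ 3072*n/3119))
    (hry : (440*n/3119 < y ∧ y ≤ 1100*n/3119) ∨ (2585*n/3119 < y ∧ y ≤ 3072*n/3119))
    (hrz : (440*n/3119 < x+y ∧ x+y ≤ 1100*n/3119) ∨ (2585*n/3119 < x+y ∧ x+y ≤ 3072*n/3119)) :
    (0 < x ∧ 0 < y ∧ x + y ≤ 440*n/3119) ∨
    (0 < x ∧ 1100*n/3119 < y ∧ x + y ≤ 1210*n/3119) ∨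
    (1100*n/3119 < x ∧ 0 < y ∧ x + y ≤ 1210*n/3119) ∨
    (0 < x ∧ 2530*n/3119 < y ∧ x + y ≤ 2585*n/3119) ∨
    (2530*n/3119 < x ∧ 0 < y ∧ x + y ≤ 2585*n/3119) ∨
    (0 < x ∧ 3072*n/3119 < y ∧ x + y ≤ n) ∨
    (3072*n/3119 < x ∧ 0 < y ∧ x + y ≤ n) ∨
    (440*n/3119 < x ∧ 440*n/3119 < y ∧ x + y ≤ 1100*n/3119) ∨
    (440*n/3119 < x ∧ 2585*n/3119 < y ∧ x + y ≤ 3072*n/3119) ∨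
    (2585*n/3119 < x ∧ 440*n/3119 < y ∧ x + y ≤ 3072*n/3119) ∨
    (1210*n/3119 < x ∧ 1210*n/3119 < y ∧ x + y ≤ 2530*n/3119) := by
  rcases hrx with ⟨hx1, hx2⟩ | ⟨hx1, hx2⟩ <;>
  rcases hry with ⟨hy1, hy2⟩ | ⟨hy1, hy2⟩ <;>
  rcases hrz with ⟨hz1, hz2⟩ | ⟨hz1, hz2⟩ <;>
    first
    | (exfalso; omega)
    | exact Or.inr (Or.inr (Or.inr (Or.inr (Or.inr (Or.inr (Or.inr (Or.inl (by omega))))))))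
    | exact Or.inr (Or.inr (Or.inr (Or.inr (Or.inr (Or.inr (Or.inr (Or.inr (Or.inl (by omega)))))))))
    | exact Or.inr (Or.inr (Or.inr (Or.inr (Or.inr (Or.inr (Or.inr (Or.inr (Or.inr (Or.inl (by omega))))))))))

private lemma case2 (n x y : ℕ) (hn : 3119*3119 ≤ n) (hx : 1 ≤ x) (hy : 1 ≤ y)
    (hs : x + y ≤ n)
    (hrx : 1210*n/3119 < x ∧ x ≤ 2530*n/3119)
    (hry : 1210*n/3119 < y ∧ y ≤ 2530*n/3119)
    (hrz : 1210*n/3119 < x+y ∧ x+y ≤ 2530*n/3119) :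
    (0 < x ∧ 0 < y ∧ x + y ≤ 440*n/3119) ∨
    (0 < x ∧ 1100*n/3119 < y ∧ x + y ≤ 1210*n/3119) ∨
    (1100*n/3119 < x ∧ 0 < y ∧ x + y ≤ 1210*n/3119) ∨
    (0 < x ∧ 2530*n/3119 < y ∧ x + y ≤ 2585*n/3119) ∨
    (2530*n/3119 < x ∧ 0 < y ∧ x + y ≤ 2585*n/3119) ∨
    (0 < x ∧ 3072*n/3119 < y ∧ x + y ≤ n) ∨
    (3072*n/3119 < x ∧ 0 < y ∧ x + y ≤ n) ∨
    (440*n/3119 < x ∧ 440*n/3119 < y ∧ x + y ≤ 1100*n/3119) ∨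
    (440*n/3119 < x ∧ 2585*n/3119 < y ∧ x + y ≤ 3072*n/3119) ∨
    (2585*n/3119 < x ∧ 440*n/3119 < y ∧ x + y ≤ 3072*n/3119) ∨
    (1210*n/3119 < x ∧ 1210*n/3119 < y ∧ x + y ≤ 2530*n/3119) := by
  exact Or.inr (Or.inr (Or.inr (Or.inr (Or.inr (Or.inr (Or.inr (Or.inr (Or.inr (Or.inr (by omega))))))))))

private lemma color_of (n t : ℕ) :
    ((if t ≤ 440*n/3119 then (0:Fin 3) else if t ≤ 1100*n/3119 then 1
      else if t ≤ 1210*n/3119 then 0 else if t ≤ 2530*n/3119 then 2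
      else if t ≤ 2585*n/3119 then 0 else if t ≤ 3072*n/3119 then 1 else 0) = 0 ∧
      (t ≤ 440*n/3119 ∨ (1100*n/3119 < t ∧ t ≤ 1210*n/3119) ∨
        (2530*n/3119 < t ∧ t ≤ 2585*n/3119) ∨ 3072*n/3119 < t)) ∨
    ((if t ≤ 440*n/3119 then (0:Fin 3) else if t ≤ 1100*n/3119 then 1
      else if t ≤ 1210*n/3119 then 0 else if t ≤ 2530*n/3119 then 2
      else if t ≤ 2585*n/3119 then 0 else if t ≤ 3072*n/3119 then 1 else 0) = 1 ∧
      ((440*n/3119 < t ∧ t ≤ 1100*n/3119) ∨ (2585*n/3119 < t ∧ t ≤ 3072*n/3119))) ∨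
    ((if t ≤ 440*n/3119 then (0:Fin 3) else if t ≤ 1100*n/3119 then 1
      else if t ≤ 1210*n/3119 then 0 else if t ≤ 2530*n/3119 then 2
      else if t ≤ 2585*n/3119 then 0 else if t ≤ 3072*n/3119 then 1 else 0) = 2 ∧
      (1210*n/3119 < t ∧ t ≤ 2530*n/3119)) := by
  split_ifs with h1 h2 h3 h4 h5 h6 <;>
    first
      | exact Or.inl ⟨rfl, by omega⟩
      | exact Or.inr (Or.inl ⟨rfl, by omega⟩)
      | exact Or.inr (Or.inr ⟨rfl, by omega⟩)

private lemma schur_cases (n x y : ℕ) (hn : 3119*3119 ≤ n) (hx : 1 ≤ x) (hy : 1 ≤ y)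
    (hs : x + y ≤ n)
    (h1 : (if x ≤ 440*n/3119 then (0:Fin 3) else if x ≤ 1100*n/3119 then 1
      else if x ≤ 1210*n/3119 then 0 else if x ≤ 2530*n/3119 then 2
      else if x ≤ 2585*n/3119 then 0 else if x ≤ 3072*n/3119 then 1 else 0)
      = (if y ≤ 440*n/3119 then (0:Fin 3) else if y ≤ 1100*n/3119 then 1
      else if y ≤ 1210*n/3119 then 0 else if y ≤ 2530*n/3119 then 2
      else if y ≤ 2585*n/3119 then 0 else if y ≤ 3072*n/3119 then 1 else 0))
    (h2 : (if y ≤ 440*n/3119 then (0:Fin 3) else if y ≤ 1100*n/3119 then 1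
      else if y ≤ 1210*n/3119 then 0 else if y ≤ 2530*n/3119 then 2
      else if y ≤ 2585*n/3119 then 0 else if y ≤ 3072*n/3119 then 1 else 0)
      = (if x + y ≤ 440*n/3119 then (0:Fin 3) else if x + y ≤ 1100*n/3119 then 1
      else if x + y ≤ 1210*n/3119 then 0 else if x + y ≤ 2530*n/3119 then 2
      else if x + y ≤ 2585*n/3119 then 0 else if x + y ≤ 3072*n/3119 then 1 else 0)) :
    (0 < x ∧ 0 < y ∧ x + y ≤ 440*n/3119) ∨
    (0 < x ∧ 1100*n/3119 < y ∧ x + y ≤ 1210*n/3119) ∨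
    (1100*n/3119 < x ∧ 0 < y ∧ x + y ≤ 1210*n/3119) ∨
    (0 < x ∧ 2530*n/3119 < y ∧ x + y ≤ 2585*n/3119) ∨
    (2530*n/3119 < x ∧ 0 < y ∧ x + y ≤ 2585*n/3119) ∨
    (0 < x ∧ 3072*n/3119 < y ∧ x + y ≤ n) ∨
    (3072*n/3119 < x ∧ 0 < y ∧ x + y ≤ n) ∨
    (440*n/3119 < x ∧ 440*n/3119 < y ∧ x + y ≤ 1100*n/3119) ∨
    (440*n/3119 < x ∧ 2585*n/3119 < y ∧ x + y ≤ 3072*n/3119) ∨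
    (2585*n/3119 < x ∧ 440*n/3119 < y ∧ x + y ≤ 3072*n/3119) ∨
    (1210*n/3119 < x ∧ 1210*n/3119 < y ∧ x + y ≤ 2530*n/3119) := by
  rcases color_of n x with ⟨hcx, hrx⟩ | ⟨hcx, hrx⟩ | ⟨hcx, hrx⟩ <;>
  rcases color_of n y with ⟨hcy, hry⟩ | ⟨hcy, hry⟩ | ⟨hcy, hry⟩ <;>
  rcases color_of n (x+y) with ⟨hcz, hrz⟩ | ⟨hcz, hrz⟩ | ⟨hcz, hrz⟩ <;>
    first
    | exact absurd (hcx.symm.trans (h1.trans hcy)) (by decide)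
    | exact absurd (hcy.symm.trans (h2.trans hcz)) (by decide)
    | exact case0 n x y hn hx hy hs hrx hry hrz
    | exact case1 n x y hn hx hy hs hrx hry hrz
    | exact case2 n x y hn hx hy hs hrx hry hrz

/-- The 3-coloring of `[1,n]` into seven consecutive intervals with lengths
proportional to `1, 3/2, 1/4, 3, 1/8, 487/440, 47/440` and colors
`1, 2, 1, 3, 1, 2, 1` has at most `47n²/6238 + C·n` monochromatic Schur
triples. -/
theorem schur_three_colorings :
    ∃ C : ℝ, 0 < C ∧ ∀ n : ℕ, 0 < n →
      (schurTriples n (fun x =>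
          if x ≤ 440 * n / 3119 then (0 : Fin 3)
          else if x ≤ 1100 * n / 3119 then 1
          else if x ≤ 1210 * n / 3119 then 0
          else if x ≤ 2530 * n / 3119 then 2
          else if x ≤ 2585 * n / 3119 then 0
          else if x ≤ 3072 * n / 3119 then 1
          else 0) : ℝ) ≤ 47 * (n : ℝ) ^ 2 / 6238 + C * n := by
  refine ⟨9728161, by norm_num, fun n hn => ?_⟩
  set F : ℕ → Fin 3 := fun x =>
      if x ≤ 440 * n / 3119 then (0 : Fin 3)
      else if x ≤ 1100 * n / 3119 then 1
      else if x ≤ 1210 * n / 3119 then 0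
      else if x ≤ 2530 * n / 3119 then 2
      else if x ≤ 2585 * n / 3119 then 0
      else if x ≤ 3072 * n / 3119 then 1
      else 0 with hF
  have hn1 : (1 : ℝ) ≤ (n : ℝ) := by exact_mod_cast hn
  by_cases hbig : n < 3119 * 3119
  · -- small n : trivial bound
    have h1 : schurTriples n F ≤ n * n := by
      unfold schurTriples
      refine (Finset.card_le_card (Finset.filter_subset _ _)).trans ?_
      rw [Finset.card_product, Nat.card_Icc]
      have e : n + 1 - 1 = n := by omega
      rw [e]
    have h2 : (schurTriples n F : ℝ) ≤ (n : ℝ) * n := by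
      calc (schurTriples n F : ℝ) ≤ ((n * n : ℕ) : ℝ) := by exact_mod_cast h1
        _ = (n : ℝ) * n := by push_cast; ring
    have h3 : (n : ℝ) ≤ 9728160 := by exact_mod_cast Nat.lt_succ_iff.mp (by omega : n < 9728160 + 1)
    nlinarith [sq_nonneg ((n : ℝ))]
  · push_neg at hbig
    -- big n
    set S1 := (Finset.Icc 1 n ×ˢ Finset.Icc 1 n).filter
      (fun p => p.1 ≤ p.2 ∧ p.1 + p.2 ≤ n ∧ F p.1 = F p.2 ∧ F p.2 = F (p.1 + p.2)) with hS1
    have hSdef : schurTriples n F = S1.card := rfl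
    set S1' := (Finset.Icc 1 n ×ˢ Finset.Icc 1 n).filter
      (fun p => p.2 ≤ p.1 ∧ p.1 + p.2 ≤ n ∧ F p.1 = F p.2 ∧ F p.2 = F (p.1 + p.2)) with hS1'
    set S2 := (Finset.Icc 1 n ×ˢ Finset.Icc 1 n).filter
      (fun p => p.2 < p.1 ∧ p.1 + p.2 ≤ n ∧ F p.1 = F p.2 ∧ F p.2 = F (p.1 + p.2)) with hS2
    set D := (Finset.Icc 1 n ×ˢ Finset.Icc 1 n).filter (fun p => p.1 = p.2) with hD
    set P' := (Finset.Icc 1 n ×ˢ Finset.Icc 1 n).filter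
      (fun p => p.1 + p.2 ≤ n ∧ F p.1 = F p.2 ∧ F p.2 = F (p.1 + p.2)) with hP'
    have hswap : S1.card ≤ S1'.card := by
      refine Finset.card_le_card_of_injOn Prod.swap (fun p hp => ?_)
        (fun a _ b _ h => Prod.swap_injective h)
      simp only [hS1, hS1', Finset.mem_coe, Finset.mem_filter, Finset.mem_product, Finset.mem_Icc,
        Prod.fst_swap, Prod.snd_swap] at hp ⊢
      obtain ⟨⟨⟨ha, hb⟩, hc, hd⟩, hle, hsum, hc1, hc2⟩ := hp
      refine ⟨⟨⟨hc, hd⟩, ha, hb⟩, hle, by omega, hc1.symm, ?_⟩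
      rw [Nat.add_comm p.2 p.1]
      exact hc1.trans hc2
    have hS1'sub : S1' ⊆ S2 ∪ D := by
      intro p hp
      simp only [hS1', hS2, hD, Finset.mem_union, Finset.mem_filter, Finset.mem_product,
        Finset.mem_Icc] at hp ⊢
      obtain ⟨hmem, hle, hrest⟩ := hp
      rcases Nat.lt_or_ge p.2 p.1 with h | h
      · exact Or.inl ⟨hmem, h, hrest⟩
      · exact Or.inr ⟨hmem, by omega⟩
    have hDcard : D.card ≤ n := by
      have hsub : D ⊆ (Finset.Icc 1 n).image (fun k => (k, k)) := by
        intro p hp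
        simp only [hD, Finset.mem_filter, Finset.mem_product, Finset.mem_Icc] at hp
        simp only [Finset.mem_image, Finset.mem_Icc]
        exact ⟨p.1, ⟨hp.1.1.1, hp.1.1.2⟩, by
          ext <;> simp [hp.2.symm]⟩
      calc D.card ≤ _ := Finset.card_le_card hsub
        _ ≤ (Finset.Icc 1 n).card := Finset.card_image_le
        _ = n := by rw [Nat.card_Icc]; omega
    have hdisj : Disjoint S1 S2 := by
      rw [Finset.disjoint_left]
      intro p hp1 hp2
      simp only [hS1, hS2, Finset.mem_filter] at hp1 hp2
      omega
    have hsubP : S1 ∪ S2 ⊆ P' := by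
      intro p hp
      simp only [hS1, hS2, hP', Finset.mem_union, Finset.mem_filter] at hp ⊢
      tauto
    have hkey : 2 * S1.card ≤ P'.card + n := by
      have h1 : S1.card + S2.card = (S1 ∪ S2).card := (Finset.card_union_of_disjoint hdisj).symm
      have h2 : (S1 ∪ S2).card ≤ P'.card := Finset.card_le_card hsubP
      have h3 : S1'.card ≤ S2.card + D.card := (Finset.card_le_card hS1'sub).trans
        (Finset.card_union_le _ _)
      omega
    -- cover P' by eleven triangles
    have hcover : P' ⊆ triSet n 0 0 (440*n/3119) ∪ triSet n 0 (1100*n/3119) (1210*n/3119)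
        ∪ triSet n (1100*n/3119) 0 (1210*n/3119) ∪ triSet n 0 (2530*n/3119) (2585*n/3119)
        ∪ triSet n (2530*n/3119) 0 (2585*n/3119) ∪ triSet n 0 (3072*n/3119) n
        ∪ triSet n (3072*n/3119) 0 n ∪ triSet n (440*n/3119) (440*n/3119) (1100*n/3119)
        ∪ triSet n (440*n/3119) (2585*n/3119) (3072*n/3119)
        ∪ triSet n (2585*n/3119) (440*n/3119) (3072*n/3119)
        ∪ triSet n (1210*n/3119) (1210*n/3119) (2530*n/3119) := by
      intro p hp
      simp only [hP', Finset.mem_filter, Finset.mem_product, Finset.mem_Icc] at hp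
      obtain ⟨⟨⟨hx1, hx2⟩, hy1, hy2⟩, hsum, hc1, hc2⟩ := hp
      rw [hF] at hc1 hc2
      have H := schur_cases n p.1 p.2 hbig hx1 hy1 hsum hc1 hc2
      simp only [triSet, Finset.mem_union, Finset.mem_filter, Finset.mem_product,
        Finset.mem_Icc]
      rcases H with h | h | h | h | h | h | h | h | h | h | h
      · exact Or.inl (Or.inl (Or.inl (Or.inl (Or.inl (Or.inl (Or.inl (Or.inl (Or.inl (Or.inl (⟨⟨⟨hx1, hx2⟩, hy1, hy2⟩, h⟩))))))))))
      · exact Or.inl (Or.inl (Or.inl (Or.inl (Or.inl (Or.inl (Or.inl (Or.inl (Or.inl (Or.inr ⟨⟨⟨hx1, hx2⟩, hy1, hy2⟩, h⟩)))))))))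
      · exact Or.inl (Or.inl (Or.inl (Or.inl (Or.inl (Or.inl (Or.inl (Or.inl (Or.inr ⟨⟨⟨hx1, hx2⟩, hy1, hy2⟩, h⟩))))))))
      · exact Or.inl (Or.inl (Or.inl (Or.inl (Or.inl (Or.inl (Or.inl (Or.inr ⟨⟨⟨hx1, hx2⟩, hy1, hy2⟩, h⟩)))))))
      · exact Or.inl (Or.inl (Or.inl (Or.inl (Or.inl (Or.inl (Or.inr ⟨⟨⟨hx1, hx2⟩, hy1, hy2⟩, h⟩))))))
      · exact Or.inl (Or.inl (Or.inl (Or.inl (Or.inl (Or.inr ⟨⟨⟨hx1, hx2⟩, hy1, hy2⟩, h⟩)))))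
      · exact Or.inl (Or.inl (Or.inl (Or.inl (Or.inr ⟨⟨⟨hx1, hx2⟩, hy1, hy2⟩, h⟩))))
      · exact Or.inl (Or.inl (Or.inl (Or.inr ⟨⟨⟨hx1, hx2⟩, hy1, hy2⟩, h⟩)))
      · exact Or.inl (Or.inl (Or.inr ⟨⟨⟨hx1, hx2⟩, hy1, hy2⟩, h⟩))
      · exact Or.inl (Or.inr ⟨⟨⟨hx1, hx2⟩, hy1, hy2⟩, h⟩)
      · exact Or.inr ⟨⟨⟨hx1, hx2⟩, hy1, hy2⟩, h⟩
    have hUB : ∀ {s t : Finset (ℕ × ℕ)} {a b : ℕ},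
        s.card ≤ a → t.card ≤ b → (s ∪ t).card ≤ a + b :=
      fun hs ht => (Finset.card_union_le _ _).trans (Nat.add_le_add hs ht)
    have hPcard : P'.card ≤ (triSet n 0 0 (440*n/3119)).card
        + (triSet n 0 (1100*n/3119) (1210*n/3119)).card
        + (triSet n (1100*n/3119) 0 (1210*n/3119)).card
        + (triSet n 0 (2530*n/3119) (2585*n/3119)).card
        + (triSet n (2530*n/3119) 0 (2585*n/3119)).card
        + (triSet n 0 (3072*n/3119) n).card
        + (triSet n (3072*n/3119) 0 n).card
        + (triSet n (440*n/3119) (440*n/3119) (1100*n/3119)).card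
        + (triSet n (440*n/3119) (2585*n/3119) (3072*n/3119)).card
        + (triSet n (2585*n/3119) (440*n/3119) (3072*n/3119)).card
        + (triSet n (1210*n/3119) (1210*n/3119) (2530*n/3119)).card :=
      (Finset.card_le_card hcover).trans
        (hUB (hUB (hUB (hUB (hUB (hUB (hUB (hUB (hUB (hUB le_rfl le_rfl) le_rfl) le_rfl)
          le_rfl) le_rfl) le_rfl) le_rfl) le_rfl) le_rfl) le_rfl)
    -- triangle size bounds
    have t1 := tri_count n 0 0 (440*n/3119)
    have t2 := tri_count n 0 (1100*n/3119) (1210*n/3119)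
    have t3 := tri_count n (1100*n/3119) 0 (1210*n/3119)
    have t4 := tri_count n 0 (2530*n/3119) (2585*n/3119)
    have t5 := tri_count n (2530*n/3119) 0 (2585*n/3119)
    have t6 := tri_count n 0 (3072*n/3119) n
    have t7 := tri_count n (3072*n/3119) 0 n
    have t8 := tri_count n (440*n/3119) (440*n/3119) (1100*n/3119)
    have t9 := tri_count n (440*n/3119) (2585*n/3119) (3072*n/3119)
    have t10 := tri_count n (2585*n/3119) (440*n/3119) (3072*n/3119)
    have t11 := tri_count n (1210*n/3119) (1210*n/3119) (2530*n/3119)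
    have q1 := sq_bound (440*n/3119 - 0 - 0) 440 n 6238 (by omega)
    have q2 := sq_bound (1210*n/3119 - 0 - 1100*n/3119) 110 n 6238 (by omega)
    have q3 := sq_bound (1210*n/3119 - 1100*n/3119 - 0) 110 n 6238 (by omega)
    have q4 := sq_bound (2585*n/3119 - 0 - 2530*n/3119) 55 n 6238 (by omega)
    have q5 := sq_bound (2585*n/3119 - 2530*n/3119 - 0) 55 n 6238 (by omega)
    have q6 := sq_bound (n - 0 - 3072*n/3119) 47 n 6238 (by omega)
    have q7 := sq_bound (n - 3072*n/3119 - 0) 47 n 6238 (by omega)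
    have q8 := sq_bound (1100*n/3119 - 440*n/3119 - 440*n/3119) 220 n 6238 (by omega)
    have q9 := sq_bound (3072*n/3119 - 440*n/3119 - 2585*n/3119) 47 n 6238 (by omega)
    have q10 := sq_bound (3072*n/3119 - 2585*n/3119 - 440*n/3119) 47 n 6238 (by omega)
    have q11 := sq_bound (2530*n/3119 - 1210*n/3119 - 1210*n/3119) 110 n 6238 (by omega)
    -- cast the nat inequalities to ℝ
    have rkey : 2 * (S1.card : ℝ) ≤ (P'.card : ℝ) + n := by exact_mod_cast hkey
    have rP : (P'.card : ℝ) ≤ ((triSet n 0 0 (440*n/3119)).card : ℝ)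
        + ((triSet n 0 (1100*n/3119) (1210*n/3119)).card : ℝ)
        + ((triSet n (1100*n/3119) 0 (1210*n/3119)).card : ℝ)
        + ((triSet n 0 (2530*n/3119) (2585*n/3119)).card : ℝ)
        + ((triSet n (2530*n/3119) 0 (2585*n/3119)).card : ℝ)
        + ((triSet n 0 (3072*n/3119) n).card : ℝ)
        + ((triSet n (3072*n/3119) 0 n).card : ℝ)
        + ((triSet n (440*n/3119) (440*n/3119) (1100*n/3119)).card : ℝ)
        + ((triSet n (440*n/3119) (2585*n/3119) (3072*n/3119)).card : ℝ)
        + ((triSet n (2585*n/3119) (440*n/3119) (3072*n/3119)).card : ℝ)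
        + ((triSet n (1210*n/3119) (1210*n/3119) (2530*n/3119)).card : ℝ) := by
      exact_mod_cast hPcard
    have r1 : 2 * ((triSet n 0 0 (440*n/3119)).card : ℝ)
        ≤ ((440*n/3119 - 0 - 0 : ℕ) : ℝ) * ((440*n/3119 - 0 - 0 : ℕ) : ℝ) := by
      exact_mod_cast t1
    have r2 : 2 * ((triSet n 0 (1100*n/3119) (1210*n/3119)).card : ℝ)
        ≤ ((1210*n/3119 - 0 - 1100*n/3119 : ℕ) : ℝ) * ((1210*n/3119 - 0 - 1100*n/3119 : ℕ) : ℝ) := by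
      exact_mod_cast t2
    have r3 : 2 * ((triSet n (1100*n/3119) 0 (1210*n/3119)).card : ℝ)
        ≤ ((1210*n/3119 - 1100*n/3119 - 0 : ℕ) : ℝ) * ((1210*n/3119 - 1100*n/3119 - 0 : ℕ) : ℝ) := by
      exact_mod_cast t3
    have r4 : 2 * ((triSet n 0 (2530*n/3119) (2585*n/3119)).card : ℝ)
        ≤ ((2585*n/3119 - 0 - 2530*n/3119 : ℕ) : ℝ) * ((2585*n/3119 - 0 - 2530*n/3119 : ℕ) : ℝ) := by
      exact_mod_cast t4
    have r5 : 2 * ((triSet n (2530*n/3119) 0 (2585*n/3119)).card : ℝ)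
        ≤ ((2585*n/3119 - 2530*n/3119 - 0 : ℕ) : ℝ) * ((2585*n/3119 - 2530*n/3119 - 0 : ℕ) : ℝ) := by
      exact_mod_cast t5
    have r6 : 2 * ((triSet n 0 (3072*n/3119) n).card : ℝ)
        ≤ ((n - 0 - 3072*n/3119 : ℕ) : ℝ) * ((n - 0 - 3072*n/3119 : ℕ) : ℝ) := by
      exact_mod_cast t6
    have r7 : 2 * ((triSet n (3072*n/3119) 0 n).card : ℝ)
        ≤ ((n - 3072*n/3119 - 0 : ℕ) : ℝ) * ((n - 3072*n/3119 - 0 : ℕ) : ℝ) := by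
      exact_mod_cast t7
    have r8 : 2 * ((triSet n (440*n/3119) (440*n/3119) (1100*n/3119)).card : ℝ)
        ≤ ((1100*n/3119 - 440*n/3119 - 440*n/3119 : ℕ) : ℝ) * ((1100*n/3119 - 440*n/3119 - 440*n/3119 : ℕ) : ℝ) := by
      exact_mod_cast t8
    have r9 : 2 * ((triSet n (440*n/3119) (2585*n/3119) (3072*n/3119)).card : ℝ)
        ≤ ((3072*n/3119 - 440*n/3119 - 2585*n/3119 : ℕ) : ℝ) * ((3072*n/3119 - 440*n/3119 - 2585*n/3119 : ℕ) : ℝ) := by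
      exact_mod_cast t9
    have r10 : 2 * ((triSet n (2585*n/3119) (440*n/3119) (3072*n/3119)).card : ℝ)
        ≤ ((3072*n/3119 - 2585*n/3119 - 440*n/3119 : ℕ) : ℝ) * ((3072*n/3119 - 2585*n/3119 - 440*n/3119 : ℕ) : ℝ) := by
      exact_mod_cast t10
    have r11 : 2 * ((triSet n (1210*n/3119) (1210*n/3119) (2530*n/3119)).card : ℝ)
        ≤ ((2530*n/3119 - 1210*n/3119 - 1210*n/3119 : ℕ) : ℝ) * ((2530*n/3119 - 1210*n/3119 - 1210*n/3119 : ℕ) : ℝ) := by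
      exact_mod_cast t11
    rw [hSdef]
    linarith [q1, q2, q3, q4, q5, q6, q7, q8, q9, q10, q11, r1, r2, r3, r4, r5, r6, r7,
      r8, r9, r10, r11, rkey, rP, hn1]
end
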